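/- arXiv:1412.7340 — 7 statements merged into one kernel-verified Lean document; each statement's English description precedes it below -/
import Mathlib

section
/- Let Ω be a set and let Ω* be the free monoid on Ω. Then for every finitely generated left congruence ρ on Ω* and all a, b ∈ Ω* the following two conditions hold: (i) the left annihilator congruence {(u,v) ∈ Ω*×Ω* : (ua, va) ∈ ρ} is a finitely generated left congruence on Ω*; (ii) if there exist u, v ∈ Ω* with (ua, vb) ∈ ρ, then there exists a finite set F ⊆ Ω* such that every f ∈ F satisfies (f, sa) ∈ ρ and (f, tb) ∈ ρ for some s, t ∈ Ω*, and for all u, v ∈ Ω* with (ua, vb) ∈ ρ there exist f ∈ F and w ∈ Ω* with (ua, wf) ∈ ρ. (These two conditions express that Ω* is left coherent; together with right coherence this shows Ω* is coherent.) -/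
/-- A left congruence on a monoid `S`: an equivalence relation compatible with
left multiplication. -/
def IsLeftCong {S : Type*} [Monoid S] (ρ : Set (S × S)) : Prop :=
  Equivalence (fun a b : S => (a, b) ∈ ρ) ∧ ∀ u v t : S, (u, v) ∈ ρ → (t * u, t * v) ∈ ρ

/-- The left congruence generated by a set `H` of pairs: the smallest left
congruence containing `H`. -/
def lcGen {S : Type*} [Monoid S] (H : Set (S × S)) : Set (S × S) :=
  ⋂₀ {ρ : Set (S × S) | IsLeftCong ρ ∧ H ⊆ ρ}

namespace FMC

section Gen
variable {S : Type*} [Monoid S]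

theorem mem_lcGen_iff {H : Set (S × S)} {p : S × S} :
    p ∈ lcGen H ↔ ∀ ρ : Set (S × S), IsLeftCong ρ → H ⊆ ρ → p ∈ ρ := by
  simp only [lcGen, Set.mem_sInter, Set.mem_setOf_eq, and_imp]

theorem isLeftCong_lcGen (H : Set (S × S)) : IsLeftCong (lcGen H) := by
  constructor
  · constructor
    · intro x
      exact mem_lcGen_iff.mpr fun ρ hρ _ => hρ.1.refl x
    · intro x y h
      exact mem_lcGen_iff.mpr fun ρ hρ hH => hρ.1.symm (mem_lcGen_iff.mp h ρ hρ hH)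
    · intro x y z h1 h2
      exact mem_lcGen_iff.mpr fun ρ hρ hH =>
        hρ.1.trans (mem_lcGen_iff.mp h1 ρ hρ hH) (mem_lcGen_iff.mp h2 ρ hρ hH)
  · intro u v t h
    exact mem_lcGen_iff.mpr fun ρ hρ hH => hρ.2 u v t (mem_lcGen_iff.mp h ρ hρ hH)

theorem subset_lcGen (H : Set (S × S)) : H ⊆ lcGen H :=
  fun _ hp => mem_lcGen_iff.mpr fun _ _ hH => hH hp

theorem lcGen_le {H ρ : Set (S × S)} (h1 : IsLeftCong ρ) (h2 : H ⊆ ρ) : lcGen H ⊆ ρ :=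
  Set.sInter_subset_of_mem ⟨h1, h2⟩

end Gen

variable {Ω : Type*}

/-- splitting of an equation between products in a free monoid -/
theorem fm_cases {x m c p : FreeMonoid Ω} (h : x * m = c * p) :
    (∃ t, c = x * t ∧ m = t * p) ∨ (∃ e, x = c * e ∧ p = e * m) := by
  have h' : x.toList ++ m.toList = c.toList ++ p.toList := by
    have := congrArg FreeMonoid.toList h
    simpa [FreeMonoid.toList_mul] using this
  rcases List.append_eq_append_iff.mp h' with ⟨t, ht1, ht2⟩ | ⟨e, he1, he2⟩
  · refine Or.inl ⟨FreeMonoid.ofList t, ?_, ?_⟩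
    · apply FreeMonoid.toList.injective
      simpa [FreeMonoid.toList_mul] using ht1
    · apply FreeMonoid.toList.injective
      simpa [FreeMonoid.toList_mul] using ht2
  · refine Or.inr ⟨FreeMonoid.ofList e, ?_, ?_⟩
    · apply FreeMonoid.toList.injective
      simpa [FreeMonoid.toList_mul] using he1
    · apply FreeMonoid.toList.injective
      simpa [FreeMonoid.toList_mul] using he2

/-- one rewriting step: replace a suffix `p` by `q` for `(p,q) ∈ R` -/
def Step (R : Set (FreeMonoid Ω × FreeMonoid Ω)) (x y : FreeMonoid Ω) : Prop :=
  ∃ c p q, (p, q) ∈ R ∧ x = c * p ∧ y = c * q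

inductive Chain (R : Set (FreeMonoid Ω × FreeMonoid Ω)) :
    FreeMonoid Ω → FreeMonoid Ω → ℕ → Prop
  | refl (x) : Chain R x x 0
  | head {x y z n} : Step R x y → Chain R y z n → Chain R x z (n + 1)

variable {R : Set (FreeMonoid Ω × FreeMonoid Ω)}

theorem Step.mul_left {x y : FreeMonoid Ω} (t : FreeMonoid Ω) (h : Step R x y) :
    Step R (t * x) (t * y) := by
  obtain ⟨c, p, q, hpq, rfl, rfl⟩ := h
  exact ⟨t * c, p, q, hpq, (mul_assoc _ _ _).symm, (mul_assoc _ _ _).symm⟩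

theorem Chain.mul_left {x y : FreeMonoid Ω} {n : ℕ} (t : FreeMonoid Ω)
    (h : Chain R x y n) : Chain R (t * x) (t * y) n := by
  induction h with
  | refl x => exact Chain.refl _
  | head s _ ih => exact Chain.head (s.mul_left t) ih

theorem Chain.snoc {x y z : FreeMonoid Ω} {n : ℕ} (h : Chain R x y n) (s : Step R y z) :
    Chain R x z (n + 1) := by
  induction h with
  | refl x => exact Chain.head s (Chain.refl _)
  | head s' _ ih => exact Chain.head s' (ih s)

theorem Chain.symm (hsym : ∀ p q : FreeMonoid Ω, (p, q) ∈ R → (q, p) ∈ R)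
    {x y : FreeMonoid Ω} {n : ℕ} (h : Chain R x y n) : Chain R y x n := by
  induction h with
  | refl x => exact Chain.refl _
  | head s _ ih =>
      obtain ⟨c, p, q, hpq, rfl, rfl⟩ := s
      exact ih.snoc ⟨c, q, p, hsym _ _ hpq, rfl, rfl⟩

theorem Chain.trans {x y z : FreeMonoid Ω} {n m : ℕ} (h1 : Chain R x y n)
    (h2 : Chain R y z m) : Chain R x z (n + m) := by
  induction h1 with
  | refl x => simpa using h2
  | head s _ ih =>
      have := Chain.head s (ih h2)
      simpa [Nat.succ_add, Nat.add_comm, Nat.add_assoc, Nat.add_left_comm] using this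

theorem Chain.head_inv {x z : FreeMonoid Ω} {n : ℕ} (h : Chain R x z (n + 1)) :
    ∃ y, Step R x y ∧ Chain R y z n := by
  cases h with
  | head s c => exact ⟨_, s, c⟩

theorem Chain.eq_zero {x y : FreeMonoid Ω} (h : Chain R x y 0) : x = y := by
  cases h; rfl

theorem Chain.last {x z : FreeMonoid Ω} {n : ℕ} (h : Chain R x z (n + 1)) :
    ∃ y, Chain R x y n ∧ Step R y z := by
  induction n generalizing x with
  | zero =>
      cases h with
      | head s c => cases c; exact ⟨x, Chain.refl x, s⟩
  | succ n ih =>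
      cases h with
      | head s c =>
          obtain ⟨y', cy, s'⟩ := ih c
          exact ⟨y', Chain.head s cy, s'⟩

-- continuing namespace FMC, variable {Ω}
section Main

variable {Ω : Type*} (ρ R : Set (FreeMonoid Ω × FreeMonoid Ω)) (a : FreeMonoid Ω)

/-- all components of pairs of R -/
def comps : Set (FreeMonoid Ω) := Prod.fst '' R ∪ Prod.snd '' R

/-- suffixes of components of R and of a -/
def Gset : Set (FreeMonoid Ω) :=
  {g | ∃ w, (w ∈ comps R ∨ w = a) ∧ g.toList <:+ w.toList}

/-- prefixes of elements of Gset -/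
def Eset : Set (FreeMonoid Ω) :=
  {e | ∃ g ∈ Gset R a, e.toList <+: g.toList}

def J (r : FreeMonoid Ω) : Prop := ∃ s, (s * a, r) ∈ ρ

open Classical in
noncomputable def sfun (r : FreeMonoid Ω) : FreeMonoid Ω :=
  if r = a then 1 else if h : J ρ a r then h.choose else 1

variable {ρ R a}

theorem sfun_a : sfun ρ a a = 1 := by simp [sfun]

theorem sfun_spec (hρ : IsLeftCong ρ) {r : FreeMonoid Ω} (h : J ρ a r) :
    (sfun ρ a r * a, r) ∈ ρ := by
  classical
  by_cases hr : r = a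
  · rw [hr, sfun_a, one_mul]
    exact hρ.1.refl a
  · rw [sfun, if_neg hr, dif_pos h]
    exact h.choose_spec

/-- the finite generating set for the annihilator congruence -/
def Xset : Set (FreeMonoid Ω × FreeMonoid Ω) :=
  {p | ∃ e r q, e ∈ Eset R a ∧ r ∈ Gset R a ∧ q ∈ Gset R a ∧ (e * r, q) ∈ ρ ∧
      J ρ a r ∧ J ρ a q ∧ p = (e * sfun ρ a r, sfun ρ a q)}

theorem finite_suffixSet (w : FreeMonoid Ω) : {g : FreeMonoid Ω | g.toList <:+ w.toList}.Finite := by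
  apply Set.Finite.subset ((w.toList.tails.finite_toSet).image FreeMonoid.ofList)
  intro g hg
  exact ⟨g.toList, (List.mem_tails _ _).mpr hg, rfl⟩

theorem finite_prefixSet (w : FreeMonoid Ω) : {g : FreeMonoid Ω | g.toList <+: w.toList}.Finite := by
  apply Set.Finite.subset ((w.toList.inits.finite_toSet).image FreeMonoid.ofList)
  intro g hg
  exact ⟨g.toList, (List.mem_inits _ _).mpr hg, rfl⟩

theorem finite_comps (hR : R.Finite) : (comps R).Finite :=
  (hR.image _).union (hR.image _)

theorem finite_Gset (hR : R.Finite) : (Gset R a).Finite := by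
  have h1 : (comps R ∪ {a}).Finite := (finite_comps hR).union (Set.finite_singleton a)
  have : Gset R a = ⋃ w ∈ comps R ∪ {a}, {g : FreeMonoid Ω | g.toList <:+ w.toList} := by
    ext g
    simp only [Gset, Set.mem_setOf_eq, Set.mem_iUnion, Set.mem_union, Set.mem_singleton_iff]
    constructor
    · rintro ⟨w, hw, hsuf⟩
      exact ⟨w, hw, hsuf⟩
    · rintro ⟨w, hw, hsuf⟩
      exact ⟨w, hw, hsuf⟩
  rw [this]
  exact h1.biUnion fun w _ => finite_suffixSet w

theorem finite_Eset (hR : R.Finite) : (Eset R a).Finite := by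
  have : Eset R a = ⋃ g ∈ Gset R a, {e : FreeMonoid Ω | e.toList <+: g.toList} := by
    ext e
    simp only [Eset, Set.mem_setOf_eq, Set.mem_iUnion]
    tauto
  rw [this]
  exact (finite_Gset hR).biUnion fun g _ => finite_prefixSet g

theorem finite_Xset (hR : R.Finite) : (Xset (ρ := ρ) (R := R) (a := a)).Finite := by
  apply Set.Finite.subset (((finite_Eset (a := a) hR).prod ((finite_Gset (a := a) hR).prod
    (finite_Gset (a := a) hR))).image
    (fun t : FreeMonoid Ω × FreeMonoid Ω × FreeMonoid Ω =>
      (t.1 * sfun ρ a t.2.1, sfun ρ a t.2.2)))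
  rintro p ⟨e, r, q, he, hr, hq, _, _, _, rfl⟩
  exact ⟨⟨e, r, q⟩, ⟨he, hr, hq⟩, rfl⟩

theorem mem_Gset_self_a : a ∈ Gset R a := ⟨a, Or.inr rfl, List.suffix_refl _⟩

theorem J_a (hρ : IsLeftCong ρ) : J ρ a a := ⟨1, by rw [one_mul]; exact hρ.1.refl a⟩

end Main

section Core

variable {Ω : Type*} {ρ R : Set (FreeMonoid Ω × FreeMonoid Ω)} {a : FreeMonoid Ω}

theorem chain_rho (hρ : IsLeftCong ρ) (hRρ : R ⊆ ρ) {x y : FreeMonoid Ω} {n : ℕ}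
    (h : Chain R x y n) : (x, y) ∈ ρ := by
  induction h with
  | refl x => exact hρ.1.refl x
  | head s _ ih =>
      obtain ⟨c, p, q, hpq, rfl, rfl⟩ := s
      exact hρ.1.trans (hρ.2 p q c (hRρ hpq)) ih

theorem gen_mem (he : e ∈ Eset R a) (hr : r ∈ Gset R a) (hq : q ∈ Gset R a)
    (h1 : (e * r, q) ∈ ρ) (h2 : J ρ a r) (h3 : J ρ a q) :
    (e * sfun ρ a r, sfun ρ a q) ∈ lcGen (Xset (ρ := ρ) (R := R) (a := a)) :=
  subset_lcGen _ ⟨e, r, q, he, hr, hq, h1, h2, h3, rfl⟩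

theorem comps_fst {p q : FreeMonoid Ω} (h : (p, q) ∈ R) : p ∈ comps R :=
  Or.inl ⟨(p, q), h, rfl⟩

theorem comps_snd {p q : FreeMonoid Ω} (h : (p, q) ∈ R) : q ∈ comps R :=
  Or.inr ⟨(p, q), h, rfl⟩

theorem mem_Gset_of_comps {p : FreeMonoid Ω} (h : p ∈ comps R) : p ∈ Gset R a :=
  ⟨p, Or.inl h, List.suffix_refl _⟩

theorem prefix_of_eq_mul {e m p : FreeMonoid Ω} (h : p = e * m) : e.toList <+: p.toList :=
  ⟨m.toList, by rw [h]; simp [FreeMonoid.toList_mul]⟩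

/-- Main lemma, case `y = 1`:  if `r` is chain-connected to `m` and `x*m` is
chain-connected to `r'`, then `(x * sfun r, sfun r')` lies in the congruence
generated by `Xset`. -/
theorem ML0 (hρ : IsLeftCong ρ) (hRρ : R ⊆ ρ) :
    ∀ (n : ℕ) (r r' : FreeMonoid Ω), r ∈ Gset R a → r' ∈ Gset R a → J ρ a r → J ρ a r' →
    ∀ (x m : FreeMonoid Ω) (k : ℕ), Chain R r m k → Chain R (x * m) r' n →
    (x * sfun ρ a r, sfun ρ a r') ∈ lcGen (Xset (ρ := ρ) (R := R) (a := a)) := by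
  intro n
  induction n with
  | zero =>
      intro r r' hr hr' hJr hJr' x m k ck c0
      have hxm : x * m = r' := by cases c0; rfl
      have he : x ∈ Eset R a := ⟨r', hr', prefix_of_eq_mul hxm.symm⟩
      have h1 : (x * r, r') ∈ ρ := by
        rw [← hxm]; exact hρ.2 r m x (chain_rho hρ hRρ ck)
      have hJr'2 : J ρ a r' := hJr'
      exact gen_mem he hr hr' h1 hJr hJr'
  | succ n ih =>
      intro r r' hr hr' hJr hJr' x m k ck cc
      cases cc with
      | head s c =>
          obtain ⟨c₀, p, q, hpq, heq, rfl⟩ := s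
          rcases fm_cases heq with ⟨t, rfl, hm⟩ | ⟨e, rfl, hp⟩
          · -- phase 1 : the step does not touch `x`
            subst hm
            have ck' : Chain R r (t * q) (k + 1) := ck.snoc ⟨t, p, q, hpq, rfl, rfl⟩
            have c' : Chain R (x * (t * q)) r' n := by rw [← mul_assoc]; exact c
            exact ih r r' hr hr' hJr hJr' x (t * q) (k + 1) ck' c'
          · -- violation : the step eats the nonempty suffix `e` of `x`
            subst hp
            have hq : q ∈ Gset R a := mem_Gset_of_comps (comps_snd hpq)
            have hpG : e * m ∈ Gset R a := mem_Gset_of_comps (comps_fst hpq)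
            have he : e ∈ Eset R a := ⟨e * m, hpG, prefix_of_eq_mul rfl⟩
            have her : (e * r, q) ∈ ρ :=
              hρ.1.trans (hρ.2 r m e (chain_rho hρ hRρ ck)) (hRρ hpq)
            have hJq : J ρ a q := by
              refine ⟨e * sfun ρ a r, hρ.1.trans ?_ her⟩
              rw [mul_assoc]
              exact hρ.2 _ _ e (sfun_spec hρ hJr)
            have hgen := gen_mem (ρ := ρ) he hr hq her hJr hJq
            have h1 := (isLeftCong_lcGen (Xset (ρ := ρ) (R := R) (a := a))).2 _ _ c₀ hgen
            have h2 := ih q r' hq hr' hJq hJr' c₀ q 0 (Chain.refl q) c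
            refine (isLeftCong_lcGen _).1.trans ?_ h2
            rw [mul_assoc]
            exact h1

/-- Main lemma, general version. -/
theorem ML1 (hρ : IsLeftCong ρ) (hRρ : R ⊆ ρ)
    (hsym : ∀ p q : FreeMonoid Ω, (p, q) ∈ R → (q, p) ∈ R) :
    ∀ (n : ℕ) (r r' : FreeMonoid Ω), r ∈ Gset R a → r' ∈ Gset R a → J ρ a r → J ρ a r' →
    ∀ (x y m : FreeMonoid Ω) (k : ℕ), Chain R r m k → Chain R (x * m) (y * r') n →
    (x * sfun ρ a r, y * sfun ρ a r') ∈ lcGen (Xset (ρ := ρ) (R := R) (a := a)) := by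
  intro n
  induction n with
  | zero =>
      intro r r' hr hr' hJr hJr' x y m k ck c0
      have hxm : x * m = y * r' := c0.eq_zero
      rcases fm_cases hxm with ⟨t, rfl, hm⟩ | ⟨e, rfl, hr'eq⟩
      · -- flip case : y = x * t, m = t * r'
        subst hm
        have crev : Chain R (t * r') r k := ck.symm hsym
        have h0 := ML0 (a := a) hρ hRρ k r' r hr' hr hJr' hJr t r' 0 (Chain.refl r') crev
        have h1 := (isLeftCong_lcGen (Xset (ρ := ρ) (R := R) (a := a))).1.symm h0
        have h2 := (isLeftCong_lcGen (Xset (ρ := ρ) (R := R) (a := a))).2 _ _ x h1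
        rw [← mul_assoc] at h2
        exact h2
      · -- generator case : x = y * e, r' = e * m
        have he : e ∈ Eset R a := ⟨r', hr', prefix_of_eq_mul hr'eq⟩
        have h1 : (e * r, r') ∈ ρ := by
          rw [hr'eq]; exact hρ.2 r m e (chain_rho hρ hRρ ck)
        have hgen := gen_mem (ρ := ρ) he hr hr' h1 hJr hJr'
        have h2 := (isLeftCong_lcGen (Xset (ρ := ρ) (R := R) (a := a))).2 _ _ y hgen
        rw [← mul_assoc] at h2
        exact h2
  | succ n ih =>
      intro r r' hr hr' hJr hJr' x y m k ck cc
      obtain ⟨z, s, c⟩ := cc.head_inv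
      obtain ⟨c₀, p, q, hpq, heq, rfl⟩ := s
      rcases fm_cases heq with ⟨t, rfl, hm⟩ | ⟨e, rfl, hp⟩
      · subst hm
        have ck' : Chain R r (t * q) (k + 1) := ck.snoc ⟨t, p, q, hpq, rfl, rfl⟩
        have c' : Chain R (x * (t * q)) (y * r') n := by rw [← mul_assoc]; exact c
        exact ih r r' hr hr' hJr hJr' x y (t * q) (k + 1) ck' c'
      · subst hp
        have hq : q ∈ Gset R a := mem_Gset_of_comps (comps_snd hpq)
        have hpG : e * m ∈ Gset R a := mem_Gset_of_comps (comps_fst hpq)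
        have he : e ∈ Eset R a := ⟨e * m, hpG, prefix_of_eq_mul rfl⟩
        have her : (e * r, q) ∈ ρ :=
          hρ.1.trans (hρ.2 r m e (chain_rho hρ hRρ ck)) (hRρ hpq)
        have hJq : J ρ a q := by
          refine ⟨e * sfun ρ a r, hρ.1.trans ?_ her⟩
          rw [mul_assoc]
          exact hρ.2 _ _ e (sfun_spec hρ hJr)
        have hgen := gen_mem (ρ := ρ) he hr hq her hJr hJq
        have h1 := (isLeftCong_lcGen (Xset (ρ := ρ) (R := R) (a := a))).2 _ _ c₀ hgen
        have h2 := ih q r' hq hr' hJq hJr' c₀ y q 0 (Chain.refl q) c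
        refine (isLeftCong_lcGen _).1.trans ?_ h2
        rw [mul_assoc]
        exact h1

end Core

section PartTwo

variable {Ω : Type*} {ρ R : Set (FreeMonoid Ω × FreeMonoid Ω)}

/-- suffixes of components of R -/
def SufC (R : Set (FreeMonoid Ω × FreeMonoid Ω)) : Set (FreeMonoid Ω) :=
  {f | ∃ w ∈ comps R, f.toList <:+ w.toList}

theorem finite_SufC (hR : R.Finite) : (SufC R).Finite := by
  have : SufC R = ⋃ w ∈ comps R, {g : FreeMonoid Ω | g.toList <:+ w.toList} := by
    ext g
    simp only [SufC, Set.mem_setOf_eq, Set.mem_iUnion]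
    tauto
  rw [this]
  exact (finite_comps hR).biUnion fun w _ => finite_suffixSet w

theorem PL (hρ : IsLeftCong ρ) (hRρ : R ⊆ ρ) (a : FreeMonoid Ω) :
    ∀ (n : ℕ) (b u v : FreeMonoid Ω), Chain R (u * a) (v * b) n →
    ∃ f, (f ∈ SufC R ∨ f = a ∨ f = b) ∧ ∃ s t w,
      (f, s * a) ∈ ρ ∧ (f, t * b) ∈ ρ ∧ (u * a, w * f) ∈ ρ := by
  intro n
  induction n with
  | zero =>
      intro b u v c0
      rcases fm_cases c0.eq_zero with ⟨t, rfl, ha⟩ | ⟨s, rfl, hb⟩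
      · refine ⟨a, Or.inr (Or.inl rfl), 1, t, u, ?_, ?_, ?_⟩
        · rw [one_mul]; exact hρ.1.refl a
        · rw [← ha]; exact hρ.1.refl a
        · exact hρ.1.refl (u * a)
      · refine ⟨b, Or.inr (Or.inr rfl), s, 1, v, ?_, ?_, ?_⟩
        · rw [← hb]; exact hρ.1.refl b
        · rw [one_mul]; exact hρ.1.refl b
        · rw [mul_assoc, ← hb]; exact hρ.1.refl _
  | succ n ih =>
      intro b u v cc
      obtain ⟨z, czn, s⟩ := cc.last
      obtain ⟨c, p, q, hpq, rfl, heq⟩ := s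
      rcases fm_cases heq with ⟨t₂, rfl, hb⟩ | ⟨w₂, rfl, hq⟩
      -- heq : v * b = c * q ; fm_cases heq : first ⟨t₂, c = v*t₂, b = t₂*q⟩,
      -- second ⟨w₂, v = c*w₂, q = w₂*b⟩  -- note: used heq not heq.symm below; adjust
      · -- c = v * t₂, b = t₂ * q
        have czn' : Chain R (u * a) (v * (t₂ * p)) n := by rw [← mul_assoc]; exact czn
        obtain ⟨f, hf, s₁, t₁, w₁, hfa, hfb', hua⟩ := ih (t₂ * p) u v czn'
        have hstep : (t₁ * (t₂ * p), t₁ * b) ∈ ρ := by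
          rw [hb, ← mul_assoc, ← mul_assoc]
          exact hρ.2 p q (t₁ * t₂) (hRρ hpq)
        rcases hf with hf | hf | hf
        · exact ⟨f, Or.inl hf, s₁, t₁, w₁, hfa, hρ.1.trans hfb' hstep, hua⟩
        · exact ⟨f, Or.inr (Or.inl hf), s₁, t₁, w₁, hfa, hρ.1.trans hfb' hstep, hua⟩
        · -- f = t₂ * p : patch to b
          subst hf
          have hfb : (t₂ * p, b) ∈ ρ := by
            rw [hb]; exact hρ.2 p q t₂ (hRρ hpq)
          refine ⟨b, Or.inr (Or.inr rfl), s₁, 1, w₁, ?_, ?_, ?_⟩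
          · exact hρ.1.trans (hρ.1.symm hfb) hfa
          · rw [one_mul]; exact hρ.1.refl b
          · exact hρ.1.trans hua (hρ.2 _ _ w₁ hfb)
      · -- v = c * w₂, q = w₂ * b
        obtain ⟨f, hf, s₁, t₁, w₁, hfa, hfb', hua⟩ := ih p u c czn
        have hf' : f ∈ SufC R ∨ f = a ∨ f = b := by
          rcases hf with hf | hf | hf
          · exact Or.inl hf
          · exact Or.inr (Or.inl hf)
          · exact Or.inl ⟨p, comps_fst hpq, by rw [hf]⟩
        have hstep : (t₁ * p, (t₁ * w₂) * b) ∈ ρ := by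
          rw [mul_assoc, ← hq]
          exact hρ.2 p q t₁ (hRρ hpq)
        exact ⟨f, hf', s₁, t₁ * w₂, w₁, hfa, hρ.1.trans hfb' hstep, hua⟩

end PartTwo

section Assembly

variable {Ω : Type*} {ρ R : Set (FreeMonoid Ω × FreeMonoid Ω)}

theorem ann_isLeftCong (hρ : IsLeftCong ρ) (a : FreeMonoid Ω) :
    IsLeftCong {p : FreeMonoid Ω × FreeMonoid Ω | (p.1 * a, p.2 * a) ∈ ρ} := by
  constructor
  · constructor
    · intro x; exact hρ.1.refl (x * a)
    · intro x y h; exact hρ.1.symm h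
    · intro x y z h1 h2; exact hρ.1.trans h1 h2
  · intro u v t h
    simp only [Set.mem_setOf_eq, mul_assoc]
    exact hρ.2 _ _ t h

theorem Xsub (hρ : IsLeftCong ρ) {a : FreeMonoid Ω} :
    Xset (ρ := ρ) (R := R) (a := a) ⊆
      {p : FreeMonoid Ω × FreeMonoid Ω | (p.1 * a, p.2 * a) ∈ ρ} := by
  rintro p ⟨e, r, q, he, hr, hq, her, hJr, hJq, rfl⟩
  show (e * sfun ρ a r * a, sfun ρ a q * a) ∈ ρ
  have h1 : (e * sfun ρ a r * a, e * r) ∈ ρ := by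
    rw [mul_assoc]
    exact hρ.2 _ _ e (sfun_spec hρ hJr)
  exact hρ.1.trans (hρ.1.trans h1 her) (hρ.1.symm (sfun_spec hρ hJq))

theorem rho_to_chain {H : Set (FreeMonoid Ω × FreeMonoid Ω)} (hgen : ρ = lcGen H)
    (hHR : H ⊆ R) (hsym : ∀ p q : FreeMonoid Ω, (p, q) ∈ R → (q, p) ∈ R)
    {x y : FreeMonoid Ω} (h : (x, y) ∈ ρ) : ∃ n, Chain R x y n := by
  have hsub : ρ ⊆ {p : FreeMonoid Ω × FreeMonoid Ω | ∃ n, Chain R p.1 p.2 n} := by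
    rw [hgen]
    apply lcGen_le
    · constructor
      · constructor
        · intro x; exact ⟨0, Chain.refl x⟩
        · rintro x y ⟨n, c⟩; exact ⟨n, c.symm hsym⟩
        · rintro x y z ⟨n, c1⟩ ⟨m, c2⟩; exact ⟨n + m, c1.trans c2⟩
      · rintro u v t ⟨n, c⟩; exact ⟨n, c.mul_left t⟩
    · rintro ⟨p, q⟩ hp
      exact ⟨1, Chain.head ⟨1, p, q, hHR hp, (one_mul p).symm, (one_mul q).symm⟩ (Chain.refl q)⟩
  exact hsub h

end Assembly

end FMC

/-- **Free monoids are left coherent.**  For every finitely generated left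
congruence `ρ` on the free monoid `Ω*` and all `a b ∈ Ω*`:
(i) the left annihilator congruence `{(u,v) : (ua, va) ∈ ρ}` is a finitely
generated left congruence; and
(ii) if `(ua, vb) ∈ ρ` for some `u, v`, then there is a finite set `F` of
elements each ρ-related to some `sa` and some `tb`, such that every `ua` with
`(ua, vb) ∈ ρ` for some `v` is ρ-related to `wf` for some `f ∈ F`, `w ∈ Ω*`. -/
theorem free_monoid_left_coherent (Ω : Type*)
    (ρ : Set (FreeMonoid Ω × FreeMonoid Ω)) (hρ : IsLeftCong ρ)
    (hfg : ∃ H : Set (FreeMonoid Ω × FreeMonoid Ω), H.Finite ∧ ρ = lcGen H)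
    (a b : FreeMonoid Ω) :
    (∃ X : Set (FreeMonoid Ω × FreeMonoid Ω), X.Finite ∧
        {p : FreeMonoid Ω × FreeMonoid Ω | (p.1 * a, p.2 * a) ∈ ρ} = lcGen X) ∧
    ((∃ u v : FreeMonoid Ω, (u * a, v * b) ∈ ρ) →
      ∃ F : Set (FreeMonoid Ω), F.Finite ∧
        (∀ f ∈ F, ∃ s t : FreeMonoid Ω, (f, s * a) ∈ ρ ∧ (f, t * b) ∈ ρ) ∧
        (∀ u v : FreeMonoid Ω, (u * a, v * b) ∈ ρ →
          ∃ f ∈ F, ∃ w : FreeMonoid Ω, (u * a, w * f) ∈ ρ)) := by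
  classical
  obtain ⟨H, hHfin, hHgen⟩ := hfg
  set R : Set (FreeMonoid Ω × FreeMonoid Ω) := H ∪ Prod.swap '' H with hR
  have hHR : H ⊆ R := Set.subset_union_left
  have hsym : ∀ p q : FreeMonoid Ω, (p, q) ∈ R → (q, p) ∈ R := by
    rintro p q (h | ⟨x, hx, hxe⟩)
    · exact Or.inr ⟨(p, q), h, rfl⟩
    · refine Or.inl ?_
      have : x = (q, p) := by
        have := congrArg Prod.swap hxe
        simpa using this
      rwa [← this]
  have hRρ : R ⊆ ρ := by
    rintro ⟨p, q⟩ (h | ⟨x, hx, hxe⟩)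
    · rw [hHgen]; exact FMC.subset_lcGen H h
    · have : x = (q, p) := by
        have := congrArg Prod.swap hxe
        simpa using this
      subst this
      have : (q, p) ∈ ρ := by rw [hHgen]; exact FMC.subset_lcGen H hx
      exact hρ.1.symm this
  have hRfin : R.Finite := hHfin.union (hHfin.image _)
  constructor
  · -- part (i)
    refine ⟨FMC.Xset (ρ := ρ) (R := R) (a := a), FMC.finite_Xset hRfin, ?_⟩
    apply Set.Subset.antisymm
    · rintro ⟨u, v⟩ h
      obtain ⟨n, ch⟩ := FMC.rho_to_chain hHgen hHR hsym h
      have := FMC.ML1 hρ hRρ hsym n a a FMC.mem_Gset_self_a FMC.mem_Gset_self_a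
        (FMC.J_a hρ) (FMC.J_a hρ) u v a 0 (FMC.Chain.refl a) ch
      rw [FMC.sfun_a, mul_one, mul_one] at this
      exact this
    · exact FMC.lcGen_le (FMC.ann_isLeftCong hρ a) (FMC.Xsub hρ)
  · -- part (ii)
    intro _
    refine ⟨{f | (f ∈ FMC.SufC R ∨ f = a ∨ f = b) ∧
        ∃ s t, (f, s * a) ∈ ρ ∧ (f, t * b) ∈ ρ}, ?_, ?_, ?_⟩
    · apply Set.Finite.subset (((FMC.finite_SufC hRfin).union
        (Set.finite_singleton a)).union (Set.finite_singleton b))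
      rintro f ⟨hf | hf | hf, -⟩
      · exact Or.inl (Or.inl hf)
      · exact Or.inl (Or.inr hf)
      · exact Or.inr hf
    · rintro f ⟨-, s, t, h1, h2⟩
      exact ⟨s, t, h1, h2⟩
    · intro u v huv
      obtain ⟨n, ch⟩ := FMC.rho_to_chain hHgen hHR hsym huv
      obtain ⟨f, hf, s, t, w, hfa, hfb, hua⟩ := FMC.PL hρ hRρ a n b u v ch
      exact ⟨f, ⟨hf, s, t, hfa, hfb⟩, w, hua⟩
end

section
/- Let Ω be a set and Ω* the free monoid on Ω. Suppose a, u, b, v ∈ Ω* and c₁, d₁, t₁, …, cₙ, dₙ, tₙ ∈ Ω* (n ≥ 0) satisfy the equalities au = c₁t₁, dᵢtᵢ = c_{i+1}t_{i+1} for 1 ≤ i ≤ n−1, and dₙtₙ = bv (for n = 0 this means au = bv). Then the words u, t₁, …, tₙ, v have no common nonempty suffix if and only if at least one of u, t₁, …, tₙ, v equals the empty word ε. -/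
/-- `MSuffix x u` means the word `x` is a suffix of the word `u` in the free
monoid, i.e. `u = u' * x` for some `u'`. -/
def MSuffix {Ω : Type*} (x u : FreeMonoid Ω) : Prop := ∃ u' : FreeMonoid Ω, u = u' * x

/-- Suppose `a, u, b, v` and `c₁, d₁, t₁, …, cₙ, dₙ, tₙ` (`n ≥ 0`) in the free
monoid `Ω*` satisfy `au = c₁t₁`, `dᵢtᵢ = c_{i+1}t_{i+1}` for `1 ≤ i ≤ n-1`, and
`dₙtₙ = bv` (for `n = 0` this reads `au = bv`).  Here we encode the sequence by
functions `c d t : ℕ → Ω*` using the conventions `d 0 = a`, `t 0 = u`,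
`c (n+1) = b`, `t (n+1) = v`, so all the equalities become
`d i * t i = c (i+1) * t (i+1)` for `0 ≤ i ≤ n`.  Then the words
`u, t₁, …, tₙ, v` (i.e. `t 0, t 1, …, t (n+1)`) have no common nonempty suffix
if and only if one of them is the empty word. -/
theorem no_common_suffix_iff_some_empty (Ω : Type*) (a u b v : FreeMonoid Ω)
    (n : ℕ) (c d t : ℕ → FreeMonoid Ω)
    (hd0 : d 0 = a) (ht0 : t 0 = u) (hcn : c (n + 1) = b) (htn : t (n + 1) = v)
    (heq : ∀ i : ℕ, i ≤ n → d i * t i = c (i + 1) * t (i + 1)) :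
    (¬ ∃ x : FreeMonoid Ω, x ≠ 1 ∧ ∀ i : ℕ, i ≤ n + 1 → MSuffix x (t i)) ↔
      ∃ i : ℕ, i ≤ n + 1 ∧ t i = 1 := by
  constructor
  · intro h
    by_contra hne
    push_neg at hne
    have hnil : ∀ i, i ≤ n + 1 → FreeMonoid.toList (t i) ≠ [] := by
      intro i hi hcon
      exact hne i hi (FreeMonoid.toList.injective (by simpa using hcon))
    have key : ∀ i, i ≤ n + 1 →
        (FreeMonoid.toList (t i)).getLast? = (FreeMonoid.toList (t 0)).getLast? := by
      intro i
      induction i with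
      | zero => intro _; rfl
      | succ k ih =>
        intro hk
        have hk' : k ≤ n := Nat.succ_le_succ_iff.mp hk
        have hlist := congrArg FreeMonoid.toList (heq k hk')
        simp only [FreeMonoid.toList_mul] at hlist
        have h1 := List.getLast?_append_of_ne_nil (FreeMonoid.toList (d k))
            (hnil k (le_trans hk' (Nat.le_succ n)))
        have h2 := List.getLast?_append_of_ne_nil (FreeMonoid.toList (c (k+1)))
            (hnil (k+1) hk)
        rw [← h2, ← hlist, h1]
        exact ih (le_trans hk' (Nat.le_succ n))
    obtain ⟨l, hl⟩ := Option.isSome_iff_exists.mp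
      (List.getLast?_isSome.mpr (hnil 0 (Nat.zero_le _)))
    refine h ⟨FreeMonoid.ofList [l], ?_, ?_⟩
    · intro hcon
      have := congrArg FreeMonoid.toList hcon
      simp at this
    · intro i hi
      have hli : (FreeMonoid.toList (t i)).getLast? = some l := by
        rw [key i hi, hl]
      refine ⟨FreeMonoid.ofList ((FreeMonoid.toList (t i)).dropLast), ?_⟩
      apply FreeMonoid.toList.injective
      simp only [FreeMonoid.toList_mul, FreeMonoid.toList_ofList]
      exact (List.dropLast_append_getLast? l hli).symm
  · rintro ⟨i, hi, hti⟩ ⟨x, hx, hsuf⟩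
    obtain ⟨u', hu'⟩ := hsuf i hi
    rw [hti] at hu'
    have := congrArg FreeMonoid.toList hu'
    simp only [FreeMonoid.toList_mul, FreeMonoid.toList_one] at this
    exact hx (FreeMonoid.toList.injective (by simpa using (List.append_eq_nil_iff.mp this.symm).2))
end

section
/- Let Ω be a set, Ω* the free monoid on Ω, H ⊆ Ω*×Ω* a symmetric set, and ρ = ⟨H⟩ the right congruence generated by H. Suppose the quadruple (a,u;b,v) of elements of Ω* is irreducible with respect to ρ. Then every H-sequence connecting au and bv is irreducible with respect to (a,u;b,v); that is, whenever c₁, d₁, t₁, …, cₙ, dₙ, tₙ ∈ Ω* satisfy (cᵢ,dᵢ) ∈ H for all i, au = c₁t₁, dᵢtᵢ = c_{i+1}t_{i+1} for 1 ≤ i ≤ n−1, and dₙtₙ = bv, the words u, t₁, …, tₙ, v have no common nonempty suffix. -/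
/-- A right congruence on a monoid `S`: an equivalence relation compatible with
right multiplication. -/
def IsRightCong {S : Type*} [Monoid S] (ρ : Set (S × S)) : Prop :=
  Equivalence (fun a b : S => (a, b) ∈ ρ) ∧ ∀ u v t : S, (u, v) ∈ ρ → (u * t, v * t) ∈ ρ

/-- The right congruence generated by a set `H` of pairs: the smallest right
congruence containing `H`. -/
def rcGen {S : Type*} [Monoid S] (H : Set (S × S)) : Set (S × S) :=
  ⋂₀ {ρ : Set (S × S) | IsRightCong ρ ∧ H ⊆ ρ}

/-- A quadruple `(a,u;b,v)` is irreducible with respect to the right congruence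
`ρ` if `(au, bv) ∈ ρ` and for every common nonempty suffix `x` of `u` and `v`
(so `u = u'x`, `v = v'x`) we have `(au x⁻¹, bv x⁻¹) = (au', bv') ∉ ρ`. -/
def IrreducibleQuad {Ω : Type*} (ρ : Set (FreeMonoid Ω × FreeMonoid Ω))
    (a u b v : FreeMonoid Ω) : Prop :=
  (a * u, b * v) ∈ ρ ∧
    ∀ x u' v' : FreeMonoid Ω, x ≠ 1 → u = u' * x → v = v' * x →
      (a * u', b * v') ∉ ρ

theorem rcGen_isRightCong {S : Type*} [Monoid S] (H : Set (S × S)) :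
    IsRightCong (rcGen H) := by
  constructor
  · constructor
    · intro a ρ hρ; exact hρ.1.1.refl a
    · intro a b hab ρ hρ; exact hρ.1.1.symm (hab ρ hρ)
    · intro a b c hab hbc ρ hρ; exact hρ.1.1.trans (hab ρ hρ) (hbc ρ hρ)
  · intro u v s huv ρ hρ; exact hρ.1.2 u v s (huv ρ hρ)

/-- If the quadruple `(a,u;b,v)` is irreducible with respect to `ρ = ⟨H⟩` (`H`
symmetric), then any `H`-sequence connecting `au` and `bv` is irreducible with
respect to `(a,u;b,v)`: the words `u, t₁, …, tₙ, v` have no common nonempty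
suffix.  The sequence is encoded by `c d t : ℕ → Ω*` with the conventions
`d 0 = a`, `t 0 = u`, `c (n+1) = b`, `t (n+1) = v`; the entries of the sequence
are indexed by `1 ≤ i ≤ n`. -/
theorem Hsequence_irreducible_of_irreducibleQuad (Ω : Type*)
    (H : Set (FreeMonoid Ω × FreeMonoid Ω))
    (hsym : ∀ p : FreeMonoid Ω × FreeMonoid Ω, p ∈ H → (p.2, p.1) ∈ H)
    (a u b v : FreeMonoid Ω) (hirr : IrreducibleQuad (rcGen H) a u b v)
    (n : ℕ) (c d t : ℕ → FreeMonoid Ω)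
    (hd0 : d 0 = a) (ht0 : t 0 = u) (hcn : c (n + 1) = b) (htn : t (n + 1) = v)
    (hmem : ∀ i : ℕ, 1 ≤ i → i ≤ n → (c i, d i) ∈ H)
    (heq : ∀ i : ℕ, i ≤ n → d i * t i = c (i + 1) * t (i + 1)) :
    ¬ ∃ x : FreeMonoid Ω, x ≠ 1 ∧ ∀ i : ℕ, i ≤ n + 1 → MSuffix x (t i) := by
  have hcong : IsRightCong (rcGen H) := rcGen_isRightCong H
  have hsub : H ⊆ rcGen H := fun p hp ρ hρ => hρ.2 hp
  rintro ⟨x, hx, hsuf⟩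
  -- choose prefixes
  choose t' ht' using fun i (h : i ≤ n + 1) => hsuf i h
  -- chain membership
  have key : ∀ i : ℕ, (h : i ≤ n) →
      (d 0 * t' 0 (Nat.zero_le _), d i * t' i (le_trans h (Nat.le_succ n))) ∈ rcGen H := by
    intro i
    induction i with
    | zero => intro _; exact hcong.1.refl _
    | succ j ih =>
      intro h
      have hj : j ≤ n := le_of_lt h
      have h1 : d j * t j = c (j + 1) * t (j + 1) := heq j hj
      have h2 : d j * t' j (le_trans hj (Nat.le_succ n)) =
          c (j + 1) * t' (j + 1) (le_trans h (Nat.le_succ n)) := by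
        apply mul_right_cancel (b := x)
        rw [mul_assoc, mul_assoc, ← ht' j _, ← ht' (j + 1) _, h1]
      have h3 : (c (j + 1) * t' (j + 1) (le_trans h (Nat.le_succ n)),
          d (j + 1) * t' (j + 1) (le_trans h (Nat.le_succ n))) ∈ rcGen H :=
        hcong.2 _ _ _ (hsub (hmem (j + 1) (Nat.le_add_left 1 j) h))
      exact hcong.1.trans (h2 ▸ ih hj) h3
  -- final step from n to n+1
  have hfin : (d 0 * t' 0 (Nat.zero_le _), c (n + 1) * t' (n + 1) (le_refl _)) ∈ rcGen H := by
    have h2 : d n * t' n (Nat.le_succ n) = c (n + 1) * t' (n + 1) (le_refl _) := by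
      apply mul_right_cancel (b := x)
      rw [mul_assoc, mul_assoc, ← ht' n _, ← ht' (n + 1) _, heq n (le_refl n)]
    exact h2 ▸ key n (le_refl n)
  refine hirr.2 x (t' 0 (Nat.zero_le _)) (t' (n + 1) (le_refl _)) hx ?_ ?_ ?_
  · rw [← ht0]; exact ht' 0 _
  · rw [← htn]; exact ht' (n + 1) _
  · rw [← hd0, ← hcn]; exact hfin
end

section
/- Let Ω be a set, Ω* the free monoid on Ω, H ⊆ Ω*×Ω* a finite symmetric set, ρ = ⟨H⟩, and K = max{|p| : (p,q) ∈ H}. Let a, u, b, v ∈ Ω* and let (c₁,d₁,t₁;…;cₙ,dₙ,tₙ) be an H-sequence with au = c₁t₁, dᵢtᵢ = c_{i+1}t_{i+1} for 1 ≤ i ≤ n−1, and dₙtₙ = bv, which is irreducible with respect to (a,u;b,v). Set c_{n+1} = b and t_{n+1} = v. Then either (u = ε or t₁ = ε, and |u| ≤ max(|b|, K)), or there exist an index 1 ≤ i ≤ n with t_{i+1} = ε (so that (au, c_{i+1}) ∈ ρ) and a nonempty word x ∈ Ω* with |x| ≤ max(|b|, K) which is a common suffix of u, t₁, …, tᵢ,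 such that the sequence (c₁,d₁,t₁x⁻¹;…;c_{i−1},d_{i−1},t_{i−1}x⁻¹) satisfies aux⁻¹ = c₁t₁x⁻¹, d₁t₁x⁻¹ = c₂t₂x⁻¹, …, d_{i−1}t_{i−1}x⁻¹ = cᵢtᵢx⁻¹, and is an H-sequence irreducible with respect to (a, ux⁻¹; cᵢ, tᵢx⁻¹). -/
/-!
Every `tⱼ` that is nonempty ends in the last letter of `u`, because `dⱼtⱼ = cⱼ₊₁tⱼ₊₁` forces
nonempty `tⱼ` and `tⱼ₊₁` to share their last letter. Irreducibility therefore forces some `tⱼ`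
with `j ≥ 1` to be empty; let `i + 1` be the first such index. Cutting the longest common
suffix `x` of `u, t₁, …, tᵢ` off the first `i` steps gives an irreducible `H`-sequence, and
`|x| ≤ |tᵢ| ≤ |dᵢtᵢ| = |cᵢ₊₁|`, which is at most `K` or equals `|b|`.
-/

open FreeMonoid

section Suffix

variable {α : Type*}

theorem FreeMonoid.length_pos_iff {x : FreeMonoid α} : 0 < x.length ↔ x ≠ 1 :=
  Nat.pos_iff_ne_zero.trans length_eq_zero.not

theorem msuffix_iff_isSuffix {x u : FreeMonoid α} : MSuffix x u ↔ x.toList <:+ u.toList := by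
  constructor
  · rintro ⟨w, rfl⟩
    exact ⟨w.toList, rfl⟩
  · rintro ⟨w, hw⟩
    exact ⟨ofList w, toList.injective hw.symm⟩

theorem MSuffix.length_le {x u : FreeMonoid α} (h : MSuffix x u) : x.length ≤ u.length :=
  (msuffix_iff_isSuffix.1 h).length_le

theorem MSuffix.mul_left {x u : FreeMonoid α} (h : MSuffix x u) (p : FreeMonoid α) :
    MSuffix x (p * u) := by
  obtain ⟨w, rfl⟩ := h
  exact ⟨p * w, (mul_assoc _ _ _).symm⟩

theorem MSuffix.of_mul_eq_mul {x s s' p q : FreeMonoid α} (hx : MSuffix x s)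
    (h : p * s = q * s') (hlen : x.length ≤ s'.length) : MSuffix x s' := by
  have hxw : x.toList <:+ (q * s').toList := h ▸ msuffix_iff_isSuffix.1 (hx.mul_left p)
  have hs'w : s'.toList <:+ (q * s').toList := ⟨q.toList, rfl⟩
  exact msuffix_iff_isSuffix.2 (List.suffix_of_suffix_length_le hxw hs'w hlen)

theorem exists_msuffix_length_eq_one {u : FreeMonoid α} (hu : u ≠ 1) :
    ∃ y, MSuffix y u ∧ y.length = 1 := by
  rcases List.eq_nil_or_concat' u.toList with h | ⟨w, ω, h⟩
  · exact absurd (toList.injective h) hu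
  · exact ⟨of ω, ⟨ofList w, toList.injective h⟩, length_of ω⟩

theorem exists_longest_common_msuffix (s : ℕ → FreeMonoid α) (i : ℕ) {y : FreeMonoid α}
    (hy : ∀ j ≤ i, MSuffix y (s j)) :
    ∃ x, (∀ j ≤ i, MSuffix x (s j)) ∧ y.length ≤ x.length ∧
      ∀ z, (∀ j ≤ i, MSuffix z (s j)) → z.length ≤ x.length := by
  classical
  let P : ℕ → Prop := fun k => ∃ z : FreeMonoid α, z.length = k ∧ ∀ j ≤ i, MSuffix z (s j)
  have hP : ∀ z, (∀ j ≤ i, MSuffix z (s j)) → z.length ≤ Nat.findGreatest P (s 0).length :=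
    fun z hz => Nat.le_findGreatest (hz 0 (Nat.zero_le i)).length_le ⟨z, rfl, hz⟩
  obtain ⟨x, hxlen, hx⟩ :=
    Nat.findGreatest_spec (P := P) (hy 0 (Nat.zero_le i)).length_le ⟨y, rfl, hy⟩
  exact ⟨x, hx, hxlen ▸ hP y hy, fun z hz => hxlen ▸ hP z hz⟩

end Suffix

section HSequence

variable {α : Type*} {H : Set (FreeMonoid α × FreeMonoid α)} {n : ℕ}
  {c d t : ℕ → FreeMonoid α}

theorem IsRightCong.mem_of_hSequence {ρ : Set (FreeMonoid α × FreeMonoid α)}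
    (hρ : IsRightCong ρ) (hHρ : H ⊆ ρ) (hmem : ∀ i, 1 ≤ i → i ≤ n → (c i, d i) ∈ H)
    (heq : ∀ i, i ≤ n → d i * t i = c (i + 1) * t (i + 1)) :
    ∀ j ≤ n, (d 0 * t 0, c (j + 1) * t (j + 1)) ∈ ρ := by
  intro j hj
  induction j with
  | zero => exact heq 0 hj ▸ hρ.1.refl _
  | succ j ih =>
    have hstep : (c (j + 1) * t (j + 1), d (j + 1) * t (j + 1)) ∈ ρ :=
      hρ.2 _ _ _ (hHρ (hmem (j + 1) (by omega) (by omega)))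
    exact hρ.1.trans (ih (by omega)) (heq (j + 1) hj ▸ hstep)

theorem mem_rcGen_of_hSequence (hmem : ∀ i, 1 ≤ i → i ≤ n → (c i, d i) ∈ H)
    (heq : ∀ i, i ≤ n → d i * t i = c (i + 1) * t (i + 1)) {j : ℕ} (hj : j ≤ n) :
    (d 0 * t 0, c (j + 1) * t (j + 1)) ∈ rcGen H :=
  Set.mem_sInter.2 fun _ ⟨hρ, hHρ⟩ => hρ.mem_of_hSequence hHρ hmem heq j hj

theorem length_le_of_hSequence {b : FreeMonoid α} {K : ℕ} (hK : ∀ p ∈ H, p.1.length ≤ K)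
    (hcn : c (n + 1) = b) (hmem : ∀ i, 1 ≤ i → i ≤ n → (c i, d i) ∈ H)
    {j : ℕ} (hj1 : 1 ≤ j) (hjn : j ≤ n + 1) : (c j).length ≤ max b.length K := by
  rcases hjn.lt_or_eq with hlt | rfl
  · exact le_max_of_le_right (hK _ (hmem j hj1 (by omega)))
  · exact hcn ▸ le_max_left _ _

theorem length_le_of_hSequence_of_eq_one {b : FreeMonoid α} {K : ℕ}
    (hK : ∀ p ∈ H, p.1.length ≤ K) (hcn : c (n + 1) = b)
    (hmem : ∀ i, 1 ≤ i → i ≤ n → (c i, d i) ∈ H)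
    (heq : ∀ i, i ≤ n → d i * t i = c (i + 1) * t (i + 1)) (j : ℕ) (hj : j ≤ n)
    (htj : t (j + 1) = 1) : (t j).length ≤ max b.length K := by
  have hlen := congrArg length (heq j hj)
  rw [htj, mul_one, length_mul] at hlen
  have hc := length_le_of_hSequence (j := j + 1) hK hcn hmem (by omega) (by omega)
  omega

theorem exists_common_msuffix_length_eq_one {m : ℕ} (hne : ∀ j ≤ m, t j ≠ 1)
    (heq : ∀ j < m, d j * t j = c (j + 1) * t (j + 1)) :
    ∃ y : FreeMonoid α, y.length = 1 ∧ ∀ j ≤ m, MSuffix y (t j) := by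
  obtain ⟨y, hy, hylen⟩ := exists_msuffix_length_eq_one (hne 0 (Nat.zero_le m))
  refine ⟨y, hylen, fun j hj => ?_⟩
  induction j with
  | zero => exact hy
  | succ j ih =>
    have hlen : y.length ≤ (t (j + 1)).length := by
      rw [hylen]
      exact length_pos_iff.2 (hne _ hj)
    exact (ih (by omega)).of_mul_eq_mul (heq j hj) hlen

theorem exists_first_empty_of_irreducible (ht0 : t 0 ≠ 1)
    (heq : ∀ i, i ≤ n → d i * t i = c (i + 1) * t (i + 1))
    (hirr : ¬ ∃ x : FreeMonoid α, x ≠ 1 ∧ ∀ i, i ≤ n + 1 → MSuffix x (t i)) :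
    ∃ i ≤ n, t (i + 1) = 1 ∧ ∀ j ≤ i, t j ≠ 1 := by
  classical
  have hex : ∃ i, i ≤ n ∧ t (i + 1) = 1 := by
    by_contra! hempty
    have hne : ∀ j ≤ n + 1, t j ≠ 1
      | 0, _ => ht0
      | j + 1, hj => hempty j (by omega)
    obtain ⟨y, hylen, hy⟩ := exists_common_msuffix_length_eq_one hne fun j hj => heq j (by omega)
    exact hirr ⟨y, length_pos_iff.1 (by omega), hy⟩
  obtain ⟨hin, hti⟩ := Nat.find_spec hex
  refine ⟨Nat.find hex, hin, hti, ?_⟩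
  rintro (_ | j) hj htj
  · exact ht0 htj
  · exact Nat.find_min hex hj ⟨(Nat.lt_of_succ_le hj).le.trans hin, htj⟩

theorem hSequence_cancel_longest_common_msuffix {i : ℕ} {x : FreeMonoid α}
    (hx : ∀ j ≤ i, MSuffix x (t j))
    (hlongest : ∀ z, (∀ j ≤ i, MSuffix z (t j)) → z.length ≤ x.length)
    (heq : ∀ j < i, d j * t j = c (j + 1) * t (j + 1)) :
    ∃ t' : ℕ → FreeMonoid α, (∀ j ≤ i, t j = t' j * x) ∧
      (∀ j < i, d j * t' j = c (j + 1) * t' (j + 1)) ∧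
      ¬ ∃ y : FreeMonoid α, y ≠ 1 ∧ ∀ j ≤ i, MSuffix y (t' j) := by
  have hfactor : ∀ j, ∃ w, j ≤ i → t j = w * x := fun j =>
    if hj : j ≤ i then (hx j hj).imp fun _ hw _ => hw else ⟨1, fun h => absurd h hj⟩
  choose t' ht' using hfactor
  refine ⟨t', ht', fun j hj => mul_right_cancel (b := x) ?_, ?_⟩
  · simpa only [mul_assoc, ← ht' j hj.le, ← ht' (j + 1) hj] using heq j hj
  · rintro ⟨y, hy1, hy⟩
    have hyx : ∀ j ≤ i, MSuffix (y * x) (t j) := fun j hj => by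
      obtain ⟨w, hw⟩ := hy j hj
      exact ⟨w, by rw [ht' j hj, hw, mul_assoc]⟩
    have hypos := length_pos_iff.2 hy1
    have := hlongest _ hyx
    rw [length_mul] at this
    omega

end HSequence

theorem tech_lemma_general (Ω : Type*) (H : Set (FreeMonoid Ω × FreeMonoid Ω))
    (hfin : H.Finite)
    (K : ℕ)
    (hK : K = sSup ((fun p : FreeMonoid Ω × FreeMonoid Ω => p.1.length) '' H))
    (a u b : FreeMonoid Ω) (n : ℕ) (c d t : ℕ → FreeMonoid Ω)
    (hd0 : d 0 = a) (ht0 : t 0 = u) (hcn : c (n + 1) = b)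
    (hmem : ∀ i : ℕ, 1 ≤ i → i ≤ n → (c i, d i) ∈ H)
    (heq : ∀ i : ℕ, i ≤ n → d i * t i = c (i + 1) * t (i + 1))
    (hirr : ¬ ∃ x : FreeMonoid Ω, x ≠ 1 ∧ ∀ i : ℕ, i ≤ n + 1 → MSuffix x (t i)) :
    ((u = 1 ∨ t 1 = 1) ∧ u.length ≤ max b.length K) ∨
    (∃ i : ℕ, 1 ≤ i ∧ i ≤ n ∧ t (i + 1) = 1 ∧ (a * u, c (i + 1)) ∈ rcGen H ∧
      ∃ x : FreeMonoid Ω, ∃ t' : ℕ → FreeMonoid Ω,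
        x ≠ 1 ∧ x.length ≤ max b.length K ∧
        (∀ j : ℕ, j ≤ i → t j = t' j * x) ∧
        (∀ j : ℕ, j < i → d j * t' j = c (j + 1) * t' (j + 1)) ∧
        ¬ ∃ y : FreeMonoid Ω, y ≠ 1 ∧ ∀ j : ℕ, j ≤ i → MSuffix y (t' j)) := by
  have hKH : ∀ p ∈ H, p.1.length ≤ K := fun p hp =>
    hK ▸ le_csSup (hfin.image _).bddAbove (Set.mem_image_of_mem _ hp)
  have hlen := length_le_of_hSequence_of_eq_one hKH hcn hmem heq
  by_cases hdeg : u = 1 ∨ t 1 = 1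
  · refine .inl ⟨hdeg, ?_⟩
    rcases hdeg with rfl | ht1
    · exact Nat.zero_le _
    · exact ht0 ▸ hlen 0 (Nat.zero_le n) ht1
  obtain ⟨hu, ht1⟩ := not_or.1 hdeg
  obtain ⟨i, hin, hti, hne⟩ := exists_first_empty_of_irreducible (ht0 ▸ hu) heq hirr
  have hi1 : 1 ≤ i := Nat.one_le_iff_ne_zero.2 fun hi => ht1 (by rwa [hi] at hti)
  obtain ⟨y, hylen, hy⟩ := exists_common_msuffix_length_eq_one hne fun j hj => heq j (by omega)
  obtain ⟨x, hx, hyx, hlongest⟩ := exists_longest_common_msuffix t i hy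
  obtain ⟨t', ht', heq', hirr'⟩ :=
    hSequence_cancel_longest_common_msuffix hx hlongest fun j hj => heq j (by omega)
  have hrc : (a * u, c (i + 1)) ∈ rcGen H := by
    simpa only [hd0, ht0, hti, mul_one] using mem_rcGen_of_hSequence hmem heq hin
  refine .inr ⟨i, hi1, hin, hti, hrc, x, t', length_pos_iff.1 (by omega), ?_, ht', heq', hirr'⟩
  exact (hx i le_rfl).length_le.trans (hlen i hin hti)

/-- **Lemma (Tech).**  Let `H` be a finite symmetric subset of `Ω* × Ω*`,
`ρ = ⟨H⟩`, and `K = max { |p| : (p,q) ∈ H }`.  Let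
`(c₁,d₁,t₁; …; cₙ,dₙ,tₙ)` be an `H`-sequence with `au = c₁t₁`,
`dᵢtᵢ = c_{i+1}t_{i+1}`, `dₙtₙ = bv`, irreducible with respect to `(a,u;b,v)`
(i.e. `u, t₁, …, tₙ, v` have no common nonempty suffix).  The sequence is
encoded with the conventions `d 0 = a`, `t 0 = u`, `c (n+1) = b`,
`t (n+1) = v`.  Then either (`u = ε` or `t₁ = ε`, and `|u| ≤ max(|b|, K)`),
or there are an index `1 ≤ i ≤ n` with `t_{i+1} = ε` (hence `(au, c_{i+1}) ∈ ρ`)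
and a nonempty word `x` with `|x| ≤ max(|b|, K)`, a common suffix of
`u, t₁, …, tᵢ` (witnessed by `t' j` with `t j = t' j * x`), such that the
truncated sequence `(c₁,d₁,t₁x⁻¹; …; c_{i-1},d_{i-1},t_{i-1}x⁻¹)` satisfies
`aux⁻¹ = c₁t₁x⁻¹`, …, `d_{i-1}t_{i-1}x⁻¹ = cᵢtᵢx⁻¹` and is an `H`-sequence
irreducible with respect to `(a, ux⁻¹; cᵢ, tᵢx⁻¹)`. -/
theorem tech_lemma (Ω : Type*) (H : Set (FreeMonoid Ω × FreeMonoid Ω))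
    (hfin : H.Finite)
    (hsym : ∀ p : FreeMonoid Ω × FreeMonoid Ω, p ∈ H → (p.2, p.1) ∈ H)
    (K : ℕ)
    (hK : K = sSup ((fun p : FreeMonoid Ω × FreeMonoid Ω => p.1.length) '' H))
    (a u b v : FreeMonoid Ω) (n : ℕ) (c d t : ℕ → FreeMonoid Ω)
    (hd0 : d 0 = a) (ht0 : t 0 = u) (hcn : c (n + 1) = b) (htn : t (n + 1) = v)
    (hmem : ∀ i : ℕ, 1 ≤ i → i ≤ n → (c i, d i) ∈ H)
    (heq : ∀ i : ℕ, i ≤ n → d i * t i = c (i + 1) * t (i + 1))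
    (hirr : ¬ ∃ x : FreeMonoid Ω, x ≠ 1 ∧ ∀ i : ℕ, i ≤ n + 1 → MSuffix x (t i)) :
    ((u = 1 ∨ t 1 = 1) ∧ u.length ≤ max b.length K) ∨
    (∃ i : ℕ, 1 ≤ i ∧ i ≤ n ∧ t (i + 1) = 1 ∧ (a * u, c (i + 1)) ∈ rcGen H ∧
      ∃ x : FreeMonoid Ω, ∃ t' : ℕ → FreeMonoid Ω,
        x ≠ 1 ∧ x.length ≤ max b.length K ∧
        (∀ j : ℕ, j ≤ i → t j = t' j * x) ∧
        (∀ j : ℕ, j < i → d j * t' j = c (j + 1) * t' (j + 1)) ∧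
        ¬ ∃ y : FreeMonoid Ω, y ≠ 1 ∧ ∀ j : ℕ, j ≤ i → MSuffix y (t' j)) :=
  tech_lemma_general Ω H hfin K hK a u b n c d t hd0 ht0 hcn hmem heq hirr
end

section
/- Let Ω be a set, Ω* the free monoid on Ω, H ⊆ Ω*×Ω* a finite symmetric set, and ρ = ⟨H⟩. Suppose a, u, b, v ∈ Ω* are such that the quadruple (a,u;b,v) is irreducible with respect to ρ. Then au is ρ-related to a, to b, or to some c ∈ Ω* for which (c,d) ∈ H for some d; that is, (au, w) ∈ ρ for some w ∈ {a, b} ∪ {c : (c,d) ∈ H for some d}. -/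
/-!
Let `D` be the set of left components of pairs in `H`. Call a pair `(w₁, w₂) ∈ ρ` well-ended if
`w₁` is `ρ`-related to a word of `D`, or if `w₁` and `w₂` are both empty or end in the same letter
with `ρ`-related prefixes. Appending a nonempty word to a pair of `ρ` produces the second
alternative, so the well-ended pairs form a right congruence containing `H`, hence all of `ρ`.
For `(au, bv) ∈ ρ` with `u, v` nonempty, the second alternative strips a common last letter of
`u` and `v`, which irreducibility forbids.
-/

section RightCongruence

variable {S : Type*} [Monoid S] {H ρ : Set (S × S)}

theorem isRightCong_rcGen (H : Set (S × S)) : IsRightCong (rcGen H) := by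
  refine ⟨⟨fun a ρ hρ => hρ.1.1.refl a, fun h ρ hρ => hρ.1.1.symm (h ρ hρ),
    fun h₁ h₂ ρ hρ => hρ.1.1.trans (h₁ ρ hρ) (h₂ ρ hρ)⟩, ?_⟩
  exact fun u v t h ρ hρ => hρ.1.2 u v t (h ρ hρ)

theorem subset_rcGen : H ⊆ rcGen H :=
  fun _ hp _ hρ => hρ.2 hp

theorem rcGen_subset (hρ : IsRightCong ρ) (hH : H ⊆ ρ) : rcGen H ⊆ ρ :=
  Set.sInter_subset_of_mem ⟨hρ, hH⟩

end RightCongruence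

namespace FreeMonoid

variable {α : Type*}

theorem eq_one_or_exists_eq_mul_of (w : FreeMonoid α) : w = 1 ∨ ∃ s x, w = s * of x := by
  rcases List.eq_nil_or_concat (toList w) with h | ⟨l, x, h⟩
  · exact Or.inl (toList.injective h)
  · exact Or.inr ⟨ofList l, x, toList.injective (h.trans List.concat_eq_append)⟩

theorem mul_of_inj {s t : FreeMonoid α} {x y : α} : s * of x = t * of y ↔ s = t ∧ x = y := by
  refine ⟨fun h => ?_, fun ⟨hst, hxy⟩ => hst ▸ hxy ▸ rfl⟩
  obtain ⟨hst, hxy⟩ := List.append_inj' (congrArg toList h) rfl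
  exact ⟨toList.injective hst, List.singleton_injective hxy⟩

theorem mul_of_ne_one (s : FreeMonoid α) (x : α) : s * of x ≠ 1 := fun h => by
  simpa [toList_mul] using congrArg toList h

end FreeMonoid

open FreeMonoid

section LastLetter

variable {Ω : Type*} {ρ : Set (FreeMonoid Ω × FreeMonoid Ω)}

def LastLetterRel (ρ : Set (FreeMonoid Ω × FreeMonoid Ω)) (w₁ w₂ : FreeMonoid Ω) : Prop :=
  (w₁ = 1 ∧ w₂ = 1) ∨ ∃ s t x, (s, t) ∈ ρ ∧ w₁ = s * of x ∧ w₂ = t * of x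

theorem LastLetterRel.refl (hρ : IsRightCong ρ) (w : FreeMonoid Ω) : LastLetterRel ρ w w := by
  rcases eq_one_or_exists_eq_mul_of w with rfl | ⟨s, x, rfl⟩
  · exact Or.inl ⟨rfl, rfl⟩
  · exact Or.inr ⟨s, s, x, hρ.1.refl s, rfl, rfl⟩

theorem LastLetterRel.symm (hρ : IsRightCong ρ) {w₁ w₂ : FreeMonoid Ω}
    (h : LastLetterRel ρ w₁ w₂) : LastLetterRel ρ w₂ w₁ := by
  rcases h with ⟨h₁, h₂⟩ | ⟨s, t, x, hst, h₁, h₂⟩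
  · exact Or.inl ⟨h₂, h₁⟩
  · exact Or.inr ⟨t, s, x, hρ.1.symm hst, h₂, h₁⟩

theorem LastLetterRel.trans (hρ : IsRightCong ρ) {w₁ w₂ w₃ : FreeMonoid Ω}
    (h₁₂ : LastLetterRel ρ w₁ w₂) (h₂₃ : LastLetterRel ρ w₂ w₃) : LastLetterRel ρ w₁ w₃ := by
  rcases h₁₂ with ⟨h₁, rfl⟩ | ⟨s, t, x, hst, h₁, rfl⟩ <;>
    rcases h₂₃ with ⟨h₂, h₃⟩ | ⟨t', r, y, htr, h₂, h₃⟩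
  · exact Or.inl ⟨h₁, h₃⟩
  · exact absurd h₂.symm (mul_of_ne_one t' y)
  · exact absurd h₂ (mul_of_ne_one t x)
  · obtain ⟨rfl, rfl⟩ := mul_of_inj.mp h₂
    exact Or.inr ⟨s, r, x, hρ.1.trans hst htr, h₁, h₃⟩

theorem lastLetterRel_mul (hρ : IsRightCong ρ) {w₁ w₂ : FreeMonoid Ω} (h : (w₁, w₂) ∈ ρ)
    {t : FreeMonoid Ω} (ht : t ≠ 1) : LastLetterRel ρ (w₁ * t) (w₂ * t) := by
  obtain ⟨t, x, rfl⟩ := (eq_one_or_exists_eq_mul_of t).resolve_left ht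
  exact Or.inr ⟨w₁ * t, w₂ * t, x, hρ.2 _ _ _ h, (mul_assoc _ _ _).symm, (mul_assoc _ _ _).symm⟩

def wellEnded (ρ : Set (FreeMonoid Ω × FreeMonoid Ω)) (D : Set (FreeMonoid Ω)) :
    Set (FreeMonoid Ω × FreeMonoid Ω) :=
  {p | p ∈ ρ ∧ ((∃ c ∈ D, (p.1, c) ∈ ρ) ∨ LastLetterRel ρ p.1 p.2)}

theorem isRightCong_wellEnded (hρ : IsRightCong ρ) (D : Set (FreeMonoid Ω)) :
    IsRightCong (wellEnded ρ D) := by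
  refine ⟨⟨fun w => ⟨hρ.1.refl w, Or.inr (LastLetterRel.refl hρ w)⟩, ?_, ?_⟩, ?_⟩
  · rintro w₁ w₂ ⟨h, ⟨c, hc, h₁c⟩ | hl⟩
    · exact ⟨hρ.1.symm h, Or.inl ⟨c, hc, hρ.1.trans (hρ.1.symm h) h₁c⟩⟩
    · exact ⟨hρ.1.symm h, Or.inr (hl.symm hρ)⟩
  · rintro w₁ w₂ w₃ ⟨h₁₂, hD₁ | hl₁₂⟩ ⟨h₂₃, hw₂₃⟩
    · exact ⟨hρ.1.trans h₁₂ h₂₃, Or.inl hD₁⟩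
    rcases hw₂₃ with ⟨c, hc, h₂c⟩ | hl₂₃
    · exact ⟨hρ.1.trans h₁₂ h₂₃, Or.inl ⟨c, hc, hρ.1.trans h₁₂ h₂c⟩⟩
    · exact ⟨hρ.1.trans h₁₂ h₂₃, Or.inr (hl₁₂.trans hρ hl₂₃)⟩
  · rintro w₁ w₂ t ⟨h, hw⟩
    rcases eq_or_ne t 1 with rfl | ht
    · simpa only [mul_one] using ⟨h, hw⟩
    · exact ⟨hρ.2 _ _ _ h, Or.inr (lastLetterRel_mul hρ h ht)⟩

theorem rcGen_subset_wellEnded (H : Set (FreeMonoid Ω × FreeMonoid Ω)) :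
    rcGen H ⊆ wellEnded (rcGen H) {c | ∃ d, (c, d) ∈ H} := by
  refine rcGen_subset (isRightCong_wellEnded (isRightCong_rcGen H) _) fun p hp => ?_
  exact ⟨subset_rcGen hp, Or.inl ⟨p.1, ⟨p.2, hp⟩, (isRightCong_rcGen H).1.refl p.1⟩⟩

end LastLetter

theorem irreducibleQuad_related_general (Ω : Type*)
    (H : Set (FreeMonoid Ω × FreeMonoid Ω))
    (a u b v : FreeMonoid Ω) (hirr : IrreducibleQuad (rcGen H) a u b v) :
    ∃ w ∈ ({a, b} ∪ {c : FreeMonoid Ω | ∃ d : FreeMonoid Ω, (c, d) ∈ H} :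
        Set (FreeMonoid Ω)), (a * u, w) ∈ rcGen H := by
  obtain ⟨hrel, hirr⟩ := hirr
  rcases eq_one_or_exists_eq_mul_of u with rfl | ⟨u, x, rfl⟩
  · exact ⟨a, Or.inl (Set.mem_insert a _), by simpa using (isRightCong_rcGen H).1.refl a⟩
  rcases eq_one_or_exists_eq_mul_of v with rfl | ⟨v, y, rfl⟩
  · exact ⟨b, Or.inl (Set.mem_insert_of_mem a rfl), by simpa using hrel⟩
  obtain ⟨-, ⟨c, hc, hac⟩ | ⟨hau, -⟩ | ⟨s, t, z, hst, hs, ht⟩⟩ := rcGen_subset_wellEnded H hrel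
  · exact ⟨c, Or.inr hc, hac⟩
  · exact absurd hau (by simpa only [← mul_assoc] using mul_of_ne_one (a * u) x)
  · simp only [← mul_assoc, mul_of_inj] at hs ht
    obtain ⟨rfl, rfl⟩ := hs
    obtain ⟨rfl, rfl⟩ := ht
    exact absurd hst (hirr (of _) u v (of_ne_one _) rfl rfl)

/-- Let `H ⊆ Ω* × Ω*` be finite and symmetric and `ρ = ⟨H⟩`.  If the quadruple
`(a,u;b,v)` is irreducible with respect to `ρ`, then `au` is ρ-related to `a`,
to `b`, or to some `c` with `(c,d) ∈ H` for some `d`. -/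
theorem irreducibleQuad_related (Ω : Type*)
    (H : Set (FreeMonoid Ω × FreeMonoid Ω)) (hfin : H.Finite)
    (hsym : ∀ p : FreeMonoid Ω × FreeMonoid Ω, p ∈ H → (p.2, p.1) ∈ H)
    (a u b v : FreeMonoid Ω) (hirr : IrreducibleQuad (rcGen H) a u b v) :
    ∃ w ∈ ({a, b} ∪ {c : FreeMonoid Ω | ∃ d : FreeMonoid Ω, (c, d) ∈ H} :
        Set (FreeMonoid Ω)), (a * u, w) ∈ rcGen H :=
  irreducibleQuad_related_general Ω H a u b v hirr
end

section
/- Let Ω be a set, Ω* the free monoid on Ω, H ⊆ Ω*×Ω* a finite symmetric set, ρ = ⟨H⟩, and a, b ∈ Ω*. Let W = {a, b} ∪ {c : (c,d) ∈ H for some d}. Then for all u, v ∈ Ω* with (au, bv) ∈ ρ, there exist w ∈ W and s, t, z ∈ Ω* such that (w, as) ∈ ρ, (w, bt) ∈ ρ, and (au, wz) ∈ ρ. (In other words, the finite set X = {wρ : w ∈ W} ∩ (aρ)Ω* ∩ (bρ)Ω* generates the subact (aρ)Ω* ∩ (bρ)Ω* of the right Ω*-act Ω*/ρ, so this intersection is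 empty or finitely generated.) -/
namespace RCAux

variable {S : Type*} [Monoid S]

lemma rcGen_isRightCong (H : Set (S × S)) : IsRightCong (rcGen H) := by
  constructor
  · constructor
    · intro x ρ hρ
      exact (Set.mem_setOf_eq ▸ hρ).1.1.refl x
    · intro x y hxy ρ hρ
      exact (Set.mem_setOf_eq ▸ hρ).1.1.symm (hxy ρ hρ)
    · intro x y z hxy hyz ρ hρ
      exact (Set.mem_setOf_eq ▸ hρ).1.1.trans (hxy ρ hρ) (hyz ρ hρ)
  · intro u v t huv ρ hρ
    exact (Set.mem_setOf_eq ▸ hρ).1.2 u v t (huv ρ hρ)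

lemma subset_rcGen (H : Set (S × S)) : H ⊆ rcGen H := by
  intro p hp ρ hρ
  exact (Set.mem_setOf_eq ▸ hρ).2 hp

lemma rcGen_le {H ρ : Set (S × S)} (h : IsRightCong ρ) (hH : H ⊆ ρ) : rcGen H ⊆ ρ :=
  fun _ hx => hx ρ ⟨h, hH⟩

variable {Ω : Type*}

/-- One-step rewriting. -/
def St (H : Set (FreeMonoid Ω × FreeMonoid Ω)) (x y : FreeMonoid Ω) : Prop :=
  ∃ p q t, (p, q) ∈ H ∧ x = p * t ∧ y = q * t

lemma st_subset_rcGen {H : Set (FreeMonoid Ω × FreeMonoid Ω)} {x y : FreeMonoid Ω}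
    (h : St H x y) : (x, y) ∈ rcGen H := by
  obtain ⟨p, q, t, hpq, hx, hy⟩ := h
  subst hx; subst hy
  exact (rcGen_isRightCong H).2 p q t (subset_rcGen H hpq)

lemma rtg_subset_rcGen {H : Set (FreeMonoid Ω × FreeMonoid Ω)} {x y : FreeMonoid Ω}
    (h : Relation.ReflTransGen (St H) x y) : (x, y) ∈ rcGen H := by
  induction h with
  | refl => exact (rcGen_isRightCong H).1.refl x
  | tail _ hbc ih => exact (rcGen_isRightCong H).1.trans ih (st_subset_rcGen hbc)

lemma rtg_isRightCong (H : Set (FreeMonoid Ω × FreeMonoid Ω))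
    (hsym : ∀ p : FreeMonoid Ω × FreeMonoid Ω, p ∈ H → (p.2, p.1) ∈ H) :
    IsRightCong {p : FreeMonoid Ω × FreeMonoid Ω | Relation.ReflTransGen (St H) p.1 p.2} := by
  constructor
  · constructor
    · intro x; exact Relation.ReflTransGen.refl
    · intro x y hxy
      replace hxy : Relation.ReflTransGen (St H) x y := hxy
      induction hxy with
      | refl => exact Relation.ReflTransGen.refl
      | tail _ hbc ih =>
        refine Relation.ReflTransGen.head ?_ ih
        obtain ⟨p, q, t, hpq, hx, hy⟩ := hbc
        exact ⟨q, p, t, hsym _ hpq, hy, hx⟩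
    · intro x y z hxy hyz; exact hxy.trans hyz
  · intro u v t huv
    replace huv : Relation.ReflTransGen (St H) u v := huv
    induction huv with
    | refl => exact Relation.ReflTransGen.refl
    | tail _ hbc ih =>
      refine ih.tail ?_
      obtain ⟨p, q, r, hpq, hx, hy⟩ := hbc
      exact ⟨p, q, r * t, hpq, by rw [hx, mul_assoc], by rw [hy, mul_assoc]⟩

lemma rcGen_eq_rtg (H : Set (FreeMonoid Ω × FreeMonoid Ω))
    (hsym : ∀ p : FreeMonoid Ω × FreeMonoid Ω, p ∈ H → (p.2, p.1) ∈ H) {x y : FreeMonoid Ω}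
    (h : (x, y) ∈ rcGen H) : Relation.ReflTransGen (St H) x y := by
  have := rcGen_le (rtg_isRightCong H hsym) (fun p hp => ?_) h
  · exact this
  · exact Relation.ReflTransGen.single ⟨p.1, p.2, 1, hp, (mul_one _).symm, (mul_one _).symm⟩

lemma mul_eq_mul {a b c d : FreeMonoid Ω} (h : a * b = c * d) :
    (∃ m, c = a * m ∧ b = m * d) ∨ ∃ m, a = c * m ∧ d = m * b := by
  have h' : FreeMonoid.toList a ++ FreeMonoid.toList b
      = FreeMonoid.toList c ++ FreeMonoid.toList d := by
    rw [← FreeMonoid.toList_mul, ← FreeMonoid.toList_mul, h]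
  rcases List.append_eq_append_iff.mp h' with ⟨m, hm1, hm2⟩ | ⟨m, hm1, hm2⟩
  · left
    refine ⟨FreeMonoid.ofList m, FreeMonoid.toList.injective ?_, FreeMonoid.toList.injective ?_⟩
    · simpa [FreeMonoid.toList_mul] using hm1
    · simpa [FreeMonoid.toList_mul] using hm2
  · right
    refine ⟨FreeMonoid.ofList m, FreeMonoid.toList.injective ?_, FreeMonoid.toList.injective ?_⟩
    · simpa [FreeMonoid.toList_mul] using hm1
    · simpa [FreeMonoid.toList_mul] using hm2

end RCAux

/-- Let `H ⊆ Ω* × Ω*` be finite and symmetric, `ρ = ⟨H⟩`, `a, b ∈ Ω*`, and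
`W = {a, b} ∪ {c : (c,d) ∈ H for some d}`.  Then for all `u, v` with
`(au, bv) ∈ ρ` there exist `w ∈ W` and `s, t, z ∈ Ω*` with `(w, as) ∈ ρ`,
`(w, bt) ∈ ρ` and `(au, wz) ∈ ρ`.  (That is, the finite set
`X = {wρ : w ∈ W} ∩ (aρ)Ω* ∩ (bρ)Ω*` generates the subact
`(aρ)Ω* ∩ (bρ)Ω*` of the right `Ω*`-act `Ω*/ρ`, so this intersection is empty
or finitely generated.) -/
theorem intersection_finitely_generated (Ω : Type*)
    (H : Set (FreeMonoid Ω × FreeMonoid Ω)) (hfin : H.Finite)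
    (hsym : ∀ p : FreeMonoid Ω × FreeMonoid Ω, p ∈ H → (p.2, p.1) ∈ H)
    (a b : FreeMonoid Ω) :
    ∀ u v : FreeMonoid Ω, (a * u, b * v) ∈ rcGen H →
      ∃ w ∈ ({a, b} ∪ {c : FreeMonoid Ω | ∃ d : FreeMonoid Ω, (c, d) ∈ H} :
          Set (FreeMonoid Ω)),
        ∃ s t z : FreeMonoid Ω,
          (w, a * s) ∈ rcGen H ∧ (w, b * t) ∈ rcGen H ∧
            (a * u, w * z) ∈ rcGen H := by
  classical
  obtain ⟨⟨hrefl, hsymm, htrans⟩, hrc⟩ := RCAux.rcGen_isRightCong H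
  have key : ∀ v : FreeMonoid Ω, ∀ x : FreeMonoid Ω,
      Relation.ReflTransGen (RCAux.St H) x (b * v) →
      ∀ a u : FreeMonoid Ω, x = a * u →
        ∃ w ∈ ({a, b} ∪ {c : FreeMonoid Ω | ∃ d : FreeMonoid Ω, (c, d) ∈ H} :
            Set (FreeMonoid Ω)),
          ∃ s t z : FreeMonoid Ω,
            (w, a * s) ∈ rcGen H ∧ (w, b * t) ∈ rcGen H ∧
              (a * u, w * z) ∈ rcGen H := by
    intro v x hx
    induction hx using Relation.ReflTransGen.head_induction_on with
    | refl =>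
      intro a u hx
      rcases RCAux.mul_eq_mul hx with ⟨m, hm1, hm2⟩ | ⟨m, hm1, hm2⟩
      · -- a = b * m, v = m * u  (from b*v = a*u : first case gives a = b*m)
        refine ⟨a, Or.inl (Or.inl rfl), 1, m, u, ?_, ?_, ?_⟩
        · rw [mul_one]; exact hrefl a
        · rw [← hm1]; exact hrefl a
        · exact hrefl _
      · -- b = a * m, u = m * v
        refine ⟨b, Or.inl (Or.inr rfl), m, 1, v, ?_, ?_, ?_⟩
        · rw [← hm1]; exact hrefl b
        · rw [mul_one]; exact hrefl b
        · rw [hm2, ← mul_assoc, ← hm1]; exact hrefl _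
    | head hst hrest ih =>
      intro a u hx
      obtain ⟨p, q, r, hpq, hx1, hx2⟩ := hst
      have hq : q ∈ {c : FreeMonoid Ω | ∃ d : FreeMonoid Ω, (c, d) ∈ H} := ⟨p, hsym _ hpq⟩
      have hqp : (q, p) ∈ rcGen H := RCAux.subset_rcGen H (hsym _ hpq)
      rcases RCAux.mul_eq_mul (hx ▸ hx1 : a * u = p * r) with ⟨m, hm1, hm2⟩ | ⟨m, hm1, hm2⟩
      · -- p = a * m, u = m * r : apply ih with a := q, u := r
        obtain ⟨w, hw, s', t, z, hws, hwt, hwz⟩ := ih q r hx2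
        refine ⟨w, ?_, m * s', t, z, ?_, hwt, ?_⟩
        · rcases hw with (hw | hw) | hw
          · exact Or.inr (hw ▸ hq)
          · exact Or.inl (Or.inr hw)
          · exact Or.inr hw
        · -- w ρ q * s' ρ p * s' = a * (m * s')
          refine htrans hws (htrans (hrc q p s' hqp) ?_)
          rw [hm1, mul_assoc]; exact hrefl _
        · -- a * u = p * r ρ q * r ρ w * z
          have h1 : (a * u, q * r) ∈ rcGen H := by
            rw [hm2, ← mul_assoc, ← hm1]
            exact hrc p q r (RCAux.subset_rcGen H hpq)
          exact htrans h1 hwz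
      · -- a = p * m, r = m * u : apply ih with a := q * m, u := u
        have hx2' : q * r = (q * m) * u := by rw [hm2, mul_assoc]
        obtain ⟨w, hw, s', t, z, hws, hwt, hwz⟩ := ih (q * m) u (hx2.trans hx2')
        have hqmpm : (q * m, p * m) ∈ rcGen H := hrc q p m hqp
        have hau : (a * u, (q * m) * u) ∈ rcGen H := by
          rw [hm1]
          exact hrc (p * m) (q * m) u (hsymm hqmpm)
        rcases hw with (hw | hw) | hw
        · -- w = q * m : use a instead
          refine ⟨a, Or.inl (Or.inl rfl), 1, t, z, ?_, ?_, ?_⟩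
          · rw [mul_one]; exact hrefl a
          · refine htrans ?_ (hw ▸ hwt)
            rw [hm1]; exact hsymm hqmpm
          · refine htrans hau (htrans (hw ▸ hwz) ?_)
            rw [hm1]
            exact hrc (q * m) (p * m) z hqmpm
        · refine ⟨w, Or.inl (Or.inr hw), s', t, z, ?_, hwt, htrans hau hwz⟩
          refine htrans hws (htrans (hrc (q * m) (p * m) s' hqmpm) ?_)
          rw [hm1]; exact hrefl _
        · refine ⟨w, Or.inr hw, s', t, z, ?_, hwt, htrans hau hwz⟩
          refine htrans hws (htrans (hrc (q * m) (p * m) s' hqmpm) ?_)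
          rw [hm1]; exact hrefl _
  intro u v huv
  exact key v (a * u) (RCAux.rcGen_eq_rtg H hsym huv) a u rfl
end

section
/- Let Ω be a set, Ω* the free monoid on Ω, H ⊆ Ω*×Ω* a finite symmetric set, ρ = ⟨H⟩, and K = max{|p| : (p,q) ∈ H}. Let a, u, b, v ∈ Ω* and let (c₁,d₁,t₁;…;cₙ,dₙ,tₙ) be an H-sequence with au = c₁t₁, dᵢtᵢ = c_{i+1}t_{i+1} for 1 ≤ i ≤ n−1, and dₙtₙ = bv, which is irreducible with respect to (a,u;b,v). Set c_{n+1} = b. Then either u = ε, or there exist k ≥ 1, a factorisation u = x_k x_{k−1} ⋯ x₁ and indices n+1 ≥ ℓ₁ > ℓ₂ > … > ℓ_k ≥ 1 such that for all 1 ≤ j ≤ k: (i) 0 < |x_j| ≤ max(|b|, K), and (ii) (a u x₁⁻¹ x₂⁻¹ ⋯ x_{j−1}⁻¹, c_{ℓ_j}) ∈ ρ (in particular, for j = 1, (au, c_{ℓ₁}) ∈ ρ). -/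
/-- `descProd x j k = x k * x (k-1) * ⋯ * x j` (and `1` if `k < j`). -/
def descProd {M : Type*} [Monoid M] (x : ℕ → M) (j k : ℕ) : M :=
  (((List.range' j (k + 1 - j)).reverse).map x).prod

section RC
variable {S : Type*} [Monoid S] {H : Set (S × S)}

lemma mem_rcGen {p : S × S} (hp : p ∈ H) : p ∈ rcGen H :=
  Set.mem_sInter.2 fun _ hρ => hρ.2 hp

lemma rcGen_refl (H : Set (S × S)) (s : S) : (s, s) ∈ rcGen H :=
  Set.mem_sInter.2 fun _ hρ => hρ.1.1.refl s

lemma rcGen_trans {s u w : S} (h1 : (s, u) ∈ rcGen H) (h2 : (u, w) ∈ rcGen H) :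
    (s, w) ∈ rcGen H :=
  Set.mem_sInter.2 fun ρ hρ => hρ.1.1.trans (Set.mem_sInter.1 h1 ρ hρ) (Set.mem_sInter.1 h2 ρ hρ)

lemma rcGen_mulr {s u : S} (h : (s, u) ∈ rcGen H) (w : S) : (s * w, u * w) ∈ rcGen H :=
  Set.mem_sInter.2 fun ρ hρ => hρ.1.2 s u w (Set.mem_sInter.1 h ρ hρ)

end RC

section FM
variable {Ω : Type*}
open FreeMonoid

lemma fm_one_of_len {u : FreeMonoid Ω} (h : u.length = 0) : u = 1 :=
  toList.injective (by simpa using List.length_eq_zero_iff.mp h)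

lemma msuffix_iff {x u : FreeMonoid Ω} : MSuffix x u ↔ x.toList <:+ u.toList := by
  constructor
  · rintro ⟨u', rfl⟩
    exact ⟨u'.toList, (toList_mul u' x).symm⟩
  · rintro ⟨s, hs⟩
    exact ⟨ofList s, toList.injective (by simpa [toList_mul] using hs.symm)⟩

lemma msuffix_refl (u : FreeMonoid Ω) : MSuffix u u := ⟨1, (one_mul u).symm⟩

lemma msuffix_mul_left (x : FreeMonoid Ω) {y u : FreeMonoid Ω} (h : MSuffix y u) :
    MSuffix y (x * u) := by
  obtain ⟨u', rfl⟩ := h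
  exact ⟨x * u', (mul_assoc _ _ _).symm⟩

lemma msuffix_length_le {x u : FreeMonoid Ω} (h : MSuffix x u) : x.length ≤ u.length := by
  obtain ⟨u', rfl⟩ := h
  simp [length_mul]

lemma msuffix_comp {y z w : FreeMonoid Ω} (h1 : MSuffix y w) (h2 : MSuffix z w) :
    MSuffix y z ∨ MSuffix z y := by
  rw [msuffix_iff] at h1 h2 ⊢
  rw [msuffix_iff (x := z) (u := y)]
  exact List.suffix_or_suffix_of_suffix h1 h2

lemma msuffix_of_single {y : FreeMonoid Ω} {z : Ω} (h : MSuffix y (of z)) (hy : y ≠ 1) :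
    y = of z := by
  rw [msuffix_iff, toList_of] at h
  obtain ⟨s, hs⟩ := h
  rcases s with _ | ⟨a, s⟩
  · exact toList.injective (by simpa using hs)
  · exfalso
    have hlen := congrArg List.length hs
    rw [List.length_cons, List.length_append, List.length_nil, List.length_cons] at hlen
    have h0 : y.toList = [] := List.length_eq_zero_iff.mp (by omega)
    exact hy (toList.injective (by simpa using h0))

lemma msuffix_eq_of_len {x u : FreeMonoid Ω} (h : MSuffix x u) (hl : u.length ≤ x.length) :
    u = x := by
  obtain ⟨u', rfl⟩ := h
  rw [length_mul] at hl
  have : u' = 1 := fm_one_of_len (by omega)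
  rw [this, one_mul]

end FM

section DP
variable {M : Type*} [Monoid M]

lemma descProd_self (x : ℕ → M) (k : ℕ) : descProd x k k = x k := by
  have h : k + 1 - k = 1 := by omega
  rw [descProd, h, List.range'_one]
  simp

lemma descProd_peel (x : ℕ → M) {j k : ℕ} (h : j ≤ k) :
    descProd x j k = descProd x (j + 1) k * x j := by
  have h1 : k + 1 - j = (k - j) + 1 := by omega
  have h2 : k + 1 - (j + 1) = k - j := by omega
  rw [descProd, descProd, h1, h2, List.range'_succ, List.reverse_cons, List.map_append,
    List.prod_append]
  simp

lemma descProd_shift (x x' : ℕ → M) {j k : ℕ} (hj : 1 ≤ j)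
    (h : ∀ i, j ≤ i → i ≤ k + 1 → x i = x' (i - 1)) :
    descProd x j (k + 1) = descProd x' (j - 1) k := by
  have h1 : k + 1 + 1 - j = k + 1 - (j - 1) := by omega
  have h2 : 1 + (j - 1) = j := by omega
  have hr : List.range' j (k + 1 - (j - 1)) =
      List.map (fun i => 1 + i) (List.range' (j - 1) (k + 1 - (j - 1))) := by
    rw [List.map_add_range', h2]
  have hm : List.map x (List.range' j (k + 1 - (j - 1))) =
      List.map x' (List.range' (j - 1) (k + 1 - (j - 1))) := by
    rw [hr, List.map_map]
    apply List.map_congr_left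
    intro i hi
    rw [List.mem_range'_1] at hi
    have hx := h (1 + i) (by omega) (by omega)
    simp only [Function.comp_apply]
    rw [hx]
    congr 1
    omega
  rw [descProd, descProd, h1, List.map_reverse, List.map_reverse, hm]

end DP

section Runs
variable {Ω : Type*}

lemma chain_rel (H : Set (FreeMonoid Ω × FreeMonoid Ω)) (n : ℕ)
    (c d t : ℕ → FreeMonoid Ω)
    (hmem : ∀ i, 1 ≤ i → i ≤ n → (c i, d i) ∈ H)
    (heq : ∀ i, i ≤ n → d i * t i = c (i + 1) * t (i + 1)) :
    ∀ m, 1 ≤ m → m ≤ n + 1 → (d 0 * t 0, c m * t m) ∈ rcGen H := by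
  intro m
  induction m with
  | zero => intro h1 _; simp at h1
  | succ m ih =>
    intro _ hm
    rcases Nat.eq_zero_or_pos m with rfl | hm1
    · rw [← heq 0 (by omega)]
      exact rcGen_refl H _
    · have h1 := ih hm1 (by omega)
      have h2 := rcGen_mulr (mem_rcGen (hmem m hm1 (by omega))) (t m)
      rw [heq m (by omega)] at h2
      exact rcGen_trans h1 h2

lemma suffix_run (n : ℕ) (c d t : ℕ → FreeMonoid Ω)
    (heq : ∀ i, i ≤ n → d i * t i = c (i + 1) * t (i + 1)) (z : Ω) (L : ℕ) (hL : L ≤ n + 2)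
    (h0 : MSuffix (FreeMonoid.of z) (t 0)) (hne : ∀ i, i < L → t i ≠ 1) :
    ∀ i, i < L → MSuffix (FreeMonoid.of z) (t i) := by
  intro i
  induction i with
  | zero => intro _; exact h0
  | succ i ih =>
    intro hiL
    have hi := ih (by omega)
    have h1 : MSuffix (FreeMonoid.of z) (c (i + 1) * t (i + 1)) := by
      rw [← heq i (by omega)]
      exact msuffix_mul_left _ hi
    have h2 : MSuffix (t (i + 1)) (c (i + 1) * t (i + 1)) := ⟨c (i + 1), rfl⟩
    rcases msuffix_comp h1 h2 with h | h
    · exact h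
    · rw [msuffix_of_single h (hne (i + 1) hiL)]
      exact msuffix_refl _

end Runs

section Main
variable {Ω : Type*}
open FreeMonoid

lemma aux_main (H : Set (FreeMonoid Ω × FreeMonoid Ω)) (K : ℕ) :
    ∀ N : ℕ, ∀ u : FreeMonoid Ω, u.length ≤ N →
    ∀ (a b v : FreeMonoid Ω) (n : ℕ) (c d t : ℕ → FreeMonoid Ω),
      d 0 = a → t 0 = u → c (n + 1) = b → t (n + 1) = v →
      (∀ i : ℕ, 1 ≤ i → i ≤ n → (c i, d i) ∈ H) →
      (∀ i : ℕ, 1 ≤ i → i ≤ n → (c i).length ≤ K) →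
      (∀ i : ℕ, i ≤ n → d i * t i = c (i + 1) * t (i + 1)) →
      (¬ ∃ x : FreeMonoid Ω, x ≠ 1 ∧ ∀ i : ℕ, i ≤ n + 1 → MSuffix x (t i)) →
      u = 1 ∨
        ∃ k : ℕ, 1 ≤ k ∧ ∃ x : ℕ → FreeMonoid Ω, ∃ ℓ : ℕ → ℕ,
          u = descProd x 1 k ∧
          ℓ 1 ≤ n + 1 ∧ (∀ j : ℕ, 1 ≤ j → j < k → ℓ (j + 1) < ℓ j) ∧ 1 ≤ ℓ k ∧
          ∀ j : ℕ, 1 ≤ j → j ≤ k →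
            0 < (x j).length ∧ (x j).length ≤ max b.length K ∧
              (a * descProd x j k, c (ℓ j)) ∈ rcGen H := by
  intro N
  induction N with
  | zero =>
    intro u hu _ _ _ _ _ _ _ _ _ _ _ _ _ _ _
    exact Or.inl (fm_one_of_len (by omega))
  | succ N ih =>
    intro u hu a b v n c d t hd0 ht0 hcn htn hmem hbound heq hirr
    by_cases hu1 : u = 1
    · exact Or.inl hu1
    right
    classical
    -- the last letter of u
    have hul : u.toList ≠ [] := by
      intro h
      exact hu1 (FreeMonoid.toList.injective (by simpa using h))
    set z := u.toList.getLast hul with hz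
    have hz0 : MSuffix (FreeMonoid.of z) u := by
      rw [msuffix_iff, toList_of]
      exact ⟨u.toList.dropLast, List.dropLast_append_getLast hul⟩
    have hzne : (FreeMonoid.of z) ≠ 1 := by
      intro h
      have h2 := congrArg FreeMonoid.toList h
      simp [toList_of] at h2
    -- there is an empty t
    have hex : ∃ i, i ≤ n + 1 ∧ t i = 1 := by
      by_contra hno
      push_neg at hno
      refine hirr ⟨FreeMonoid.of z, hzne, ?_⟩
      intro i hi
      exact suffix_run n c d t heq z (n + 2) le_rfl (by rw [ht0]; exact hz0)
        (fun i' hi' => hno i' (by omega)) i (by omega)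
    set L := Nat.find hex with hLdef
    obtain ⟨hLn, hLt⟩ := Nat.find_spec hex
    rw [← hLdef] at hLn hLt
    have hL1 : 1 ≤ L := by
      by_contra h
      have hL0 : L = 0 := by omega
      rw [hL0, ht0] at hLt
      exact hu1 hLt
    have hmin : ∀ i, i < L → t i ≠ 1 := by
      intro i hi hti
      exact Nat.find_min hex hi ⟨by omega, hti⟩
    have hzall : ∀ i, i < L → MSuffix (FreeMonoid.of z) (t i) :=
      suffix_run n c d t heq z L (by omega) (by rw [ht0]; exact hz0) hmin
    -- longest common suffix of t 0, ..., t (L-1)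
    set P : ℕ → Prop := fun m => ∃ w : FreeMonoid Ω, w.length = m ∧ ∀ i, i < L → MSuffix w (t i)
      with hP
    have hP1 : P 1 := ⟨FreeMonoid.of z, by simp [FreeMonoid.length_of], hzall⟩
    have hu_len : 1 ≤ u.length := by
      rcases Nat.eq_zero_or_pos u.length with h | h
      · exact absurd (fm_one_of_len h) hu1
      · exact h
    set M := Nat.findGreatest P u.length with hM
    have hM1 : 1 ≤ M := Nat.le_findGreatest hu_len hP1
    have hPM : P M := Nat.findGreatest_spec hu_len hP1
    obtain ⟨w, hwlen, hwsuf⟩ := hPM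
    have hmax : ∀ y : FreeMonoid Ω, (∀ i, i < L → MSuffix y (t i)) → y.length ≤ M := by
      intro y hy
      by_contra hgt
      push_neg at hgt
      have hyu : y.length ≤ u.length := msuffix_length_le (by rw [← ht0]; exact hy 0 (by omega))
      exact Nat.findGreatest_is_greatest hgt hyu ⟨y, rfl, hy⟩
    obtain ⟨u', hu'⟩ : MSuffix w u := by rw [← ht0]; exact hwsuf 0 (by omega)
    -- the chain relation
    have hchain : ∀ m, 1 ≤ m → m ≤ n + 1 → (a * u, c m * t m) ∈ rcGen H := by
      intro m h1 h2
      have h3 := chain_rel H n c d t hmem heq m h1 h2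
      rwa [hd0, ht0] at h3
    have hrel1 : (a * u, c L) ∈ rcGen H := by
      have h3 := hchain L hL1 hLn
      rwa [hLt, mul_one] at h3
    -- |w| ≤ |c L| ≤ max |b| K
    have hwcL : w.length ≤ (c L).length := by
      obtain ⟨q, hq⟩ := hwsuf (L - 1) (by omega)
      have he : d (L - 1) * t (L - 1) = c L * t L := by
        have h4 := heq (L - 1) (by omega)
        have e : L - 1 + 1 = L := by omega
        rwa [e] at h4
      rw [hLt, mul_one, hq] at he
      have h5 := congrArg FreeMonoid.length he
      rw [length_mul, length_mul] at h5
      omega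
    have hcLb : (c L).length ≤ max b.length K := by
      rcases Nat.lt_or_ge L (n + 1) with h | h
      · exact le_trans (hbound L hL1 (by omega)) (le_max_right _ _)
      · have hLe : L = n + 1 := by omega
        rw [hLe, hcn]
        exact le_max_left _ _
    have hwb : w.length ≤ max b.length K := le_trans hwcL hcLb
    have hw0 : 0 < w.length := by omega
    rcases Nat.lt_or_ge L 2 with hL2 | hL2
    · -- case L = 1 : u = w
      have huw : u = w := by
        apply msuffix_eq_of_len ⟨u', hu'⟩
        have h6 : u.length ≤ M := by
          apply hmax u
          intro i hi
          have : i = 0 := by omega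
          rw [this, ht0]
          exact msuffix_refl u
        omega
      refine ⟨1, le_rfl, fun _ => w, fun _ => L, ?_, hLn, ?_, hL1, ?_⟩
      · rw [descProd_self]; exact huw
      · intro j hj1 hj2; omega
      · intro j hj1 hj2
        have hj : j = 1 := by omega
        subst hj
        refine ⟨hw0, hwb, ?_⟩
        rw [descProd_self, ← huw]
        exact hrel1
    · -- case L ≥ 2 : strip w and recurse
      set t' : ℕ → FreeMonoid Ω :=
        fun i => if hi : i < L then Classical.choose (hwsuf i hi) else 1 with ht'
      have ht'spec : ∀ i, i < L → t i = t' i * w := by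
        intro i hi
        simp only [ht', dif_pos hi]
        exact Classical.choose_spec (hwsuf i hi)
      have hulen' : (t' 0).length ≤ N := by
        have h0 : t 0 = t' 0 * w := ht'spec 0 (by omega)
        rw [ht0] at h0
        have h7 := congrArg FreeMonoid.length h0
        rw [length_mul] at h7
        omega
      have hcL1K : (c (L - 1)).length ≤ K := hbound (L - 1) (by omega) (by omega)
      have hcn' : c (L - 2 + 1) = c (L - 1) := by congr 1; omega
      have htn' : t' (L - 2 + 1) = t' (L - 1) := by congr 1; omega
      have hmem' : ∀ i, 1 ≤ i → i ≤ L - 2 → (c i, d i) ∈ H := fun i h1 h2 => hmem i h1 (by omega)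
      have hbound' : ∀ i, 1 ≤ i → i ≤ L - 2 → (c i).length ≤ K :=
        fun i h1 h2 => hbound i h1 (by omega)
      have heq' : ∀ i, i ≤ L - 2 → d i * t' i = c (i + 1) * t' (i + 1) := by
        intro i hi
        have h8 := heq i (by omega)
        rw [ht'spec i (by omega), ht'spec (i + 1) (by omega), ← mul_assoc, ← mul_assoc] at h8
        exact mul_right_cancel h8
      have hirr' : ¬ ∃ y : FreeMonoid Ω, y ≠ 1 ∧ ∀ i, i ≤ L - 2 + 1 → MSuffix y (t' i) := by
        rintro ⟨y, hy1, hy2⟩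
        have hcs : ∀ i, i < L → MSuffix (y * w) (t i) := by
          intro i hi
          obtain ⟨s, hs⟩ := hy2 i (by omega)
          exact ⟨s, by rw [ht'spec i hi, hs, mul_assoc]⟩
        have h9 := hmax (y * w) hcs
        rw [length_mul, hwlen] at h9
        exact hy1 (fm_one_of_len (by omega))
      have hres := ih (t' 0) hulen' a (c (L - 1)) (t' (L - 1)) (L - 2) c d t' hd0 rfl hcn' htn'
        hmem' hbound' heq' hirr'
      rcases hres with h1 | ⟨k', hk', x', ℓ', hfac, hl1, hdec, hlk, hspec⟩
      · -- t' 0 = 1, so u = w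
        have huw : u = w := by
          have h10 := ht'spec 0 (by omega)
          rw [ht0, h1, one_mul] at h10
          exact h10
        refine ⟨1, le_rfl, fun _ => w, fun _ => L, ?_, hLn, ?_, hL1, ?_⟩
        · rw [descProd_self]; exact huw
        · intro j hj1 hj2; omega
        · intro j hj1 hj2
          have hj : j = 1 := by omega
          subst hj
          refine ⟨hw0, hwb, ?_⟩
          rw [descProd_self, ← huw]
          exact hrel1
      · -- assemble: k = k' + 1
        set x : ℕ → FreeMonoid Ω := fun j => if j = 1 then w else x' (j - 1) with hx
        set ℓ : ℕ → ℕ := fun j => if j = 1 then L else ℓ' (j - 1) with hℓ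
        have hx1 : x 1 = w := by simp only [hx, if_pos rfl]
        have hℓ1 : ℓ 1 = L := by simp only [hℓ, if_pos rfl]
        have hxj : ∀ j, 2 ≤ j → x j = x' (j - 1) := by
          intro j hj; simp only [hx, if_neg (by omega : ¬ j = 1)]
        have hℓj : ∀ j, 2 ≤ j → ℓ j = ℓ' (j - 1) := by
          intro j hj; simp only [hℓ, if_neg (by omega : ¬ j = 1)]
        have hshift : ∀ j, 2 ≤ j → j ≤ k' + 1 →
            descProd x j (k' + 1) = descProd x' (j - 1) k' := by
          intro j hj2 hjk
          apply descProd_shift x x' (by omega)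
          intro i hi1 hi2
          exact hxj i (by omega)
        have hfac1 : u = descProd x 1 (k' + 1) := by
          rw [descProd_peel x (by omega : 1 ≤ k' + 1)]
          have e1 : descProd x (1 + 1) (k' + 1) = descProd x' 1 k' := hshift 2 le_rfl (by omega)
          rw [e1, hx1, ← hfac]
          have h11 := ht'spec 0 (by omega)
          rw [ht0] at h11
          exact h11
        refine ⟨k' + 1, by omega, x, ℓ, hfac1, ?_, ?_, ?_, ?_⟩
        · rw [hℓ1]; exact hLn
        · intro j hj1 hjk
          by_cases hj : j = 1
          · subst hj
            have e1 : ℓ 2 = ℓ' 1 := hℓj 2 le_rfl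
            rw [hℓ1]
            show ℓ (1 + 1) < L
            rw [(by norm_num : (1 : ℕ) + 1 = 2), e1]
            omega
          · have e1 : ℓ (j + 1) = ℓ' j := hℓj (j + 1) (by omega)
            have e2 : ℓ j = ℓ' (j - 1) := hℓj j (by omega)
            have h12 := hdec (j - 1) (by omega) (by omega)
            have e3 : j - 1 + 1 = j := by omega
            rw [e3] at h12
            omega
        · have e : ℓ (k' + 1) = ℓ' (k' + 1 - 1) := hℓj (k' + 1) (by omega)
          have e2 : k' + 1 - 1 = k' := by omega
          rw [e, e2]
          exact hlk
        · intro j hj1 hjk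
          by_cases hj : j = 1
          · subst hj
            refine ⟨by rw [hx1]; exact hw0, by rw [hx1]; exact hwb, ?_⟩
            rw [← hfac1, hℓ1]
            exact hrel1
          · have hj2 : 2 ≤ j := by omega
            obtain ⟨hs1, hs2, hs3⟩ := hspec (j - 1) (by omega) (by omega)
            refine ⟨by rw [hxj j hj2]; exact hs1, ?_, ?_⟩
            · rw [hxj j hj2]
              refine le_trans hs2 ?_
              rw [max_eq_right hcL1K]
              exact le_max_right _ _
            · rw [hshift j hj2 hjk, hℓj j hj2]
              exact hs3

end Main

/-- **Lemma (Main).**  Let `H ⊆ Ω* × Ω*` be finite and symmetric, `ρ = ⟨H⟩`,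
`K = max { |p| : (p,q) ∈ H }`, and let `(c₁,d₁,t₁; …; cₙ,dₙ,tₙ)` be an
`H`-sequence with `au = c₁t₁`, `dᵢtᵢ = c_{i+1}t_{i+1}`, `dₙtₙ = bv`,
irreducible with respect to `(a,u;b,v)` (i.e. `u, t₁, …, tₙ, v` have no common
nonempty suffix).  The sequence is encoded with the conventions `d 0 = a`,
`t 0 = u`, `c (n+1) = b`, `t (n+1) = v`.  Then either `u = ε`, or there exist
`k ≥ 1`, a factorisation `u = x_k x_{k-1} ⋯ x₁` and indices
`n+1 ≥ ℓ₁ > ℓ₂ > … > ℓ_k ≥ 1` such that for all `1 ≤ j ≤ k`: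
(i) `0 < |x_j| ≤ max(|b|, K)`, and
(ii) `(a·u x₁⁻¹⋯x_{j-1}⁻¹, c_{ℓ_j}) ∈ ρ`, where `u x₁⁻¹⋯x_{j-1}⁻¹ = x_k ⋯ x_j`
(in particular `(au, c_{ℓ₁}) ∈ ρ`). -/
theorem main_lemma (Ω : Type*) (H : Set (FreeMonoid Ω × FreeMonoid Ω))
    (hfin : H.Finite)
    (hsym : ∀ p : FreeMonoid Ω × FreeMonoid Ω, p ∈ H → (p.2, p.1) ∈ H)
    (K : ℕ)
    (hK : K = sSup ((fun p : FreeMonoid Ω × FreeMonoid Ω => p.1.length) '' H))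
    (a u b v : FreeMonoid Ω) (n : ℕ) (c d t : ℕ → FreeMonoid Ω)
    (hd0 : d 0 = a) (ht0 : t 0 = u) (hcn : c (n + 1) = b) (htn : t (n + 1) = v)
    (hmem : ∀ i : ℕ, 1 ≤ i → i ≤ n → (c i, d i) ∈ H)
    (heq : ∀ i : ℕ, i ≤ n → d i * t i = c (i + 1) * t (i + 1))
    (hirr : ¬ ∃ x : FreeMonoid Ω, x ≠ 1 ∧ ∀ i : ℕ, i ≤ n + 1 → MSuffix x (t i)) :
    u = 1 ∨
      ∃ k : ℕ, 1 ≤ k ∧ ∃ x : ℕ → FreeMonoid Ω, ∃ ℓ : ℕ → ℕ,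
        u = descProd x 1 k ∧
        ℓ 1 ≤ n + 1 ∧ (∀ j : ℕ, 1 ≤ j → j < k → ℓ (j + 1) < ℓ j) ∧ 1 ≤ ℓ k ∧
        ∀ j : ℕ, 1 ≤ j → j ≤ k →
          0 < (x j).length ∧ (x j).length ≤ max b.length K ∧
            (a * descProd x j k, c (ℓ j)) ∈ rcGen H := by
  have hbound : ∀ i : ℕ, 1 ≤ i → i ≤ n → (c i).length ≤ K := by
    intro i h1 h2
    rw [hK]
    exact le_csSup (Set.Finite.bddAbove (hfin.image _)) ⟨(c i, d i), hmem i h1 h2, rfl⟩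
  exact aux_main H K u.length u le_rfl a b v n c d t hd0 ht0 hcn htn hmem hbound heq hirr
end
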